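/- arXiv:2211.04322 — 4 statements merged into one kernel-verified Lean document; each statement's English description precedes it below -/
import Mathlib

section
/- Let 𝒮 be a split system on a finite set X with |X| ≥ 3. Then 𝒮 is injective if and only if 𝒮 4-dices, 5-dices and 6-dices X. -/
namespace InjectiveSplitSystems

open Finset

variable {α : Type*} [DecidableEq α]

/-- A split of `X`: an unordered bipartition of `X` into two nonempty disjoint parts,
represented as the two-element set `{A, B}` of its parts. -/
def IsSplit (X : Finset α) (S : Finset (Finset α)) : Prop :=
  ∃ A B : Finset α, S = {A, B} ∧ A ∪ B = X ∧ A ∩ B = ∅ ∧ A ≠ ∅ ∧ B ≠ ∅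

/-- `S` is an `r`-split of `X`: a split of `X` whose minimum part size is `r`. -/
def IsRSplit (X : Finset α) (r : ℕ) (S : Finset (Finset α)) : Prop :=
  IsSplit X S ∧ (∃ A ∈ S, A.card = r) ∧ ∀ A ∈ S, r ≤ A.card

/-- A split system on `X`: a set of splits of `X` containing all trivial splits
`{x} | X \ {x}`, `x ∈ X`. -/
def IsSplitSystem (X : Finset α) (𝒮 : Finset (Finset (Finset α))) : Prop :=
  (∀ S ∈ 𝒮, IsSplit X S) ∧ ∀ x ∈ X, ({{x}, X \ {x}} : Finset (Finset α)) ∈ 𝒮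

/-- `phiNe Y Y' S` says `φ_Y(S) ≠ φ_{Y'}(S)`: the part of `S` containing at least two
elements of the 3-set `Y` differs from the part of `S` containing at least two
elements of the 3-set `Y'`. -/
def phiNe (Y Y' : Finset α) (S : Finset (Finset α)) : Prop :=
  ∃ t ∈ S, ∃ t' ∈ S, t ≠ t' ∧ 2 ≤ (Y ∩ t).card ∧ 2 ≤ (Y' ∩ t').card

/-- A split system on `X` is injective if for all distinct 3-subsets `Y`, `Y'` of `X`
there is a split `S ∈ 𝒮` with `φ_Y(S) ≠ φ_{Y'}(S)`. -/
def IsInjective (X : Finset α) (𝒮 : Finset (Finset (Finset α))) : Prop :=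
  ∀ Y Y' : Finset α, Y ⊆ X → Y' ⊆ X → Y.card = 3 → Y'.card = 3 → Y ≠ Y' →
    ∃ S ∈ 𝒮, phiNe Y Y' S

/-- The restriction `S|_Y` of a split to `Y`, as the set of restricted parts. -/
def restrictSplit (S : Finset (Finset α)) (Y : Finset α) : Finset (Finset α) :=
  S.image (· ∩ Y)

open scoped Classical in
/-- The restriction `𝒮|_Y` of a split system to `Y`: all splits
`(A ∩ Y) | (B ∩ Y)` with `A|B ∈ 𝒮` and both intersections nonempty. -/
noncomputable def restrictSS (𝒮 : Finset (Finset (Finset α))) (Y : Finset α) :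
    Finset (Finset (Finset α)) :=
  (𝒮.image fun S => restrictSplit S Y).filter fun T => ∀ t ∈ T, t ≠ ∅

/-- `𝒮` 4-dices `X`. -/
def FourDices (X : Finset α) (𝒮 : Finset (Finset (Finset α))) : Prop :=
  X.card < 4 ∨ ∀ Y ⊆ X, Y.card = 4 →
    ∃ 𝒯 ⊆ restrictSS 𝒮 Y, 2 ≤ 𝒯.card ∧ ∀ S ∈ 𝒯, IsRSplit Y 2 S

/-- `𝒮` 5-dices `X`. -/
def FiveDices (X : Finset α) (𝒮 : Finset (Finset (Finset α))) : Prop :=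
  X.card < 5 ∨ ∀ Y ⊆ X, Y.card = 5 →
    ∃ 𝒯 ⊆ restrictSS 𝒮 Y, 5 ≤ 𝒯.card ∧ ∀ S ∈ 𝒯, IsRSplit Y 2 S

/-- `𝒮` 6-dices `X`: every 6-subset restriction contains a 3-split or a triangle
of 2-splits. -/
def SixDices (X : Finset α) (𝒮 : Finset (Finset (Finset α))) : Prop :=
  X.card < 6 ∨ ∀ Y ⊆ X, Y.card = 6 →
    (∃ S ∈ restrictSS 𝒮 Y, IsRSplit Y 3 S) ∨
    (∃ x ∈ Y, ∃ y ∈ Y, ∃ z ∈ Y, x ≠ y ∧ x ≠ z ∧ y ≠ z ∧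
      ({{x, y}, Y \ {x, y}} : Finset (Finset α)) ∈ restrictSS 𝒮 Y ∧
      ({{x, z}, Y \ {x, z}} : Finset (Finset α)) ∈ restrictSS 𝒮 Y ∧
      ({{y, z}, Y \ {y, z}} : Finset (Finset α)) ∈ restrictSS 𝒮 Y)

/-- Two splits are incompatible if they are distinct and all four pairwise
intersections of their parts are nonempty. -/
def Incompatible (S T : Finset (Finset α)) : Prop :=
  S ≠ T ∧ ∀ A ∈ S, ∀ B ∈ T, A ∩ B ≠ ∅

open scoped Classical in
/-- The dimension of a split system: maximum size of a pairwise incompatible subset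
(which is `1` when all splits are pairwise compatible and `𝒮` is nonempty). -/
noncomputable def dimSS (𝒮 : Finset (Finset (Finset α))) : ℕ :=
  (𝒮.powerset.filter fun 𝒯 => ∀ S ∈ 𝒯, ∀ T ∈ 𝒯, S ≠ T → Incompatible S T).sup Finset.card

/-- The injective dimension `ID(n)`: minimum dimension of an injective split system
on `{1, …, n}`. -/
noncomputable def ID (n : ℕ) : ℕ :=
  sInf {d : ℕ | ∃ 𝒮 : Finset (Finset (Finset ℕ)),
    IsSplitSystem (Finset.Icc 1 n) 𝒮 ∧ IsInjective (Finset.Icc 1 n) 𝒮 ∧ dimSS 𝒮 = d}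

/-- The injective 2-split dimension `ID₂(n)`: minimum dimension of an injective split
system on `{1, …, n}` all of whose non-trivial splits have size 2. -/
noncomputable def ID2 (n : ℕ) : ℕ :=
  sInf {d : ℕ | ∃ 𝒮 : Finset (Finset (Finset ℕ)),
    IsSplitSystem (Finset.Icc 1 n) 𝒮 ∧ IsInjective (Finset.Icc 1 n) 𝒮 ∧
    (∀ S ∈ 𝒮, IsRSplit (Finset.Icc 1 n) 1 S ∨ IsRSplit (Finset.Icc 1 n) 2 S) ∧
    dimSS 𝒮 = d}

/-- `𝒮` is rooted-injective relative to `r`. -/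
def IsRootedInjective (X : Finset α) (r : α) (𝒮 : Finset (Finset (Finset α))) : Prop :=
  ∀ Z Z' : Finset α, Z ⊆ X \ {r} → Z' ⊆ X \ {r} → Z.card = 2 → Z'.card = 2 → Z ≠ Z' →
    ∃ S ∈ 𝒮, phiNe (insert r Z) (insert r Z') S

/-- The rooted-injective dimension `ID^r(n)`: minimum dimension of a split system on an
`n`-element set that is rooted-injective relative to a given element. -/
noncomputable def IDr (n : ℕ) : ℕ :=
  sInf {d : ℕ | ∃ 𝒮 : Finset (Finset (Finset ℕ)),
    IsSplitSystem (Finset.Icc 1 n) 𝒮 ∧ IsRootedInjective (Finset.Icc 1 n) 1 𝒮 ∧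
    dimSS 𝒮 = d}

/-- `𝒮` is circular: there is a labelling `x_1, …, x_n` of `X` such that every split
of `𝒮` has the form `{x_i, …, x_j} | complement`. -/
def IsCircular (X : Finset α) (𝒮 : Finset (Finset (Finset α))) : Prop :=
  ∃ f : ℕ → α, Set.InjOn f ↑(Finset.Icc 1 X.card) ∧
    (Finset.Icc 1 X.card).image f = X ∧
    ∀ S ∈ 𝒮, ∃ i j : ℕ, 1 ≤ i ∧ i ≤ j ∧ j ≤ X.card ∧
      S = {(Finset.Icc i j).image f, X \ (Finset.Icc i j).image f}

/-- `𝒮` is maximal circular: circular and not properly contained in any circular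
split system on `X`. -/
def IsMaximalCircular (X : Finset α) (𝒮 : Finset (Finset (Finset α))) : Prop :=
  IsCircular X 𝒮 ∧ ∀ 𝒮' : Finset (Finset (Finset α)),
    IsSplitSystem X 𝒮' → IsCircular X 𝒮' → 𝒮 ⊆ 𝒮' → 𝒮' = 𝒮

/-- The degree of `x` in the graph `P(𝒮)` on vertex set `X` whose edges are the
pairs `{x, y}` with `xy | X − {x,y} ∈ 𝒮`. -/
def degP (X : Finset α) (𝒮 : Finset (Finset (Finset α))) (x : α) : ℕ :=
  ((X \ {x}).filter fun y => ({{x, y}, X \ {x, y}} : Finset (Finset α)) ∈ 𝒮).card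

/-- `P(𝒮)` contains a 3-clique. -/
def HasTriangle (X : Finset α) (𝒮 : Finset (Finset (Finset α))) : Prop :=
  ∃ x ∈ X, ∃ y ∈ X, ∃ z ∈ X, x ≠ y ∧ x ≠ z ∧ y ≠ z ∧
    ({{x, y}, X \ {x, y}} : Finset (Finset α)) ∈ 𝒮 ∧
    ({{x, z}, X \ {x, z}} : Finset (Finset α)) ∈ 𝒮 ∧
    ({{y, z}, X \ {y, z}} : Finset (Finset α)) ∈ 𝒮

/-- Conditions (B1) and (B2) for a map to be a vertex of the Buneman graph. -/
def IsBunemanVertex (𝒮 : Finset (Finset (Finset α))) (φ : {S // S ∈ 𝒮} → Finset α) : Prop :=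
  (∀ S, φ S ∈ S.1) ∧ ∀ S S', S ≠ S' → (φ S ∩ φ S').Nonempty

/-- The vertex set of the Buneman graph `B(𝒮)`. -/
abbrev BunemanVertex (𝒮 : Finset (Finset (Finset α))) : Type _ :=
  {φ : {S // S ∈ 𝒮} → Finset α // IsBunemanVertex 𝒮 φ}

/-- The Buneman graph `B(𝒮)`: two vertices are adjacent iff they differ on exactly
one split. -/
def BunemanGraph (𝒮 : Finset (Finset (Finset α))) : SimpleGraph (BunemanVertex 𝒮) where
  Adj φ ψ := ∃! S, φ.1 S ≠ ψ.1 S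
  symm := by
    constructor
    rintro φ ψ ⟨S, hS, hU⟩
    exact ⟨S, hS.symm, fun T hT => hU T hT.symm⟩
  loopless := by
    constructor
    rintro φ ⟨S, hS, -⟩
    exact hS rfl

/-- `m` is a median of `u`, `v`, `w` in the graph `G`. -/
def IsMedian {V : Type*} (G : SimpleGraph V) (u v w m : V) : Prop :=
  G.dist u m + G.dist m v = G.dist u v ∧
  G.dist v m + G.dist m w = G.dist v w ∧
  G.dist u m + G.dist m w = G.dist u w


/- ### basic helpers -/

lemma ne_of_mem_not_mem {β : Type*} {a : β} {s t : Finset β} (h : a ∈ s) (h' : a ∉ t) :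
    s ≠ t := fun e => h' (e ▸ h)

lemma pair_ne_left {x y u v : α} (h : x ∉ ({u, v} : Finset α)) :
    ({x, y} : Finset α) ≠ {u, v} :=
  ne_of_mem_not_mem (mem_insert_self x {y}) h

lemma pair_ne_right {x y u v : α} (h : y ∉ ({u, v} : Finset α)) :
    ({x, y} : Finset α) ≠ {u, v} :=
  ne_of_mem_not_mem (mem_insert_of_mem (mem_singleton_self y)) h

lemma card3 {a b c : α} (h1 : a ≠ b) (h2 : a ≠ c) (h3 : b ≠ c) :
    ({a, b, c} : Finset α).card = 3 := by
  rw [card_insert_of_notMem (by simp [h1, h2]), card_pair h3]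

lemma card4 {a b c d : α} (h1 : a ≠ b) (h2 : a ≠ c) (h3 : a ≠ d) (h4 : b ≠ c) (h5 : b ≠ d)
    (h6 : c ≠ d) : ({a, b, c, d} : Finset α).card = 4 := by
  rw [card_insert_of_notMem (by simp [h1, h2, h3]), card3 h4 h5 h6]

lemma card5 {a b c d e : α} (h1 : a ≠ b) (h2 : a ≠ c) (h3 : a ≠ d) (h4 : a ≠ e) (h5 : b ≠ c)
    (h6 : b ≠ d) (h7 : b ≠ e) (h8 : c ≠ d) (h9 : c ≠ e) (h10 : d ≠ e) :
    ({a, b, c, d, e} : Finset α).card = 5 := by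
  rw [card_insert_of_notMem (by simp [h1, h2, h3, h4]), card4 h5 h6 h7 h8 h9 h10]

lemma ne_empty_of_two_le {A : Finset α} {Y : Finset α} (h : 2 ≤ (Y ∩ A).card) : A ≠ ∅ := by
  intro he; rw [he, inter_empty] at h; simp at h

lemma ne_of_disj {A B : Finset α} (hd : A ∩ B = ∅) (hA : A ≠ ∅) : A ≠ B := by
  intro he; subst he; rw [inter_self] at hd; exact hA hd

lemma two_subset_of_three {A : Finset α} {x y z : α} (hsub : A ⊆ {x, y, z})
    (hc : A.card = 2) : A = {x, y} ∨ A = {x, z} ∨ A = {y, z} := by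
  obtain ⟨s, t, hst, rfl⟩ := Finset.card_eq_two.mp hc
  have hs : s = x ∨ s = y ∨ s = z := by simpa using hsub (mem_insert_self s {t})
  have ht : t = x ∨ t = y ∨ t = z := by
    simpa using hsub (mem_insert_of_mem (mem_singleton_self t))
  rcases hs with rfl | rfl | rfl <;> rcases ht with rfl | rfl | rfl <;>
    first
      | exact absurd rfl hst
      | exact Or.inl rfl
      | exact Or.inl (pair_comm _ _)
      | exact Or.inr (Or.inl rfl)
      | exact Or.inr (Or.inl (pair_comm _ _))
      | exact Or.inr (Or.inr rfl)
      | exact Or.inr (Or.inr (pair_comm _ _))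

lemma eq_pair_of_mem_of_card_two {A : Finset α} {s t : α} (hc : A.card = 2)
    (hs : s ∈ A) (ht : t ∈ A) (hst : s ≠ t) : A = {s, t} := by
  symm
  apply Finset.eq_of_subset_of_card_le
  · intro x hx; rcases mem_insert.mp hx with rfl | hx
    · exact hs
    · exact (mem_singleton.mp hx) ▸ ht
  · rw [card_pair hst, hc]

/- ### restriction structure -/

lemma restrictSplit_pair (P Q Z : Finset α) :
    restrictSplit {P, Q} Z = {P ∩ Z, Q ∩ Z} := by
  simp [restrictSplit, Finset.image_insert]

lemma mem_pair_resolve {β : Type*} [DecidableEq β] {t t' P Q : β}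
    (ht : t ∈ ({P, Q} : Finset β)) (ht' : t' ∈ ({P, Q} : Finset β)) (hne : t ≠ t') :
    (t = P ∧ t' = Q) ∨ (t = Q ∧ t' = P) := by
  have h1 : t = P ∨ t = Q := by simpa using ht
  have h2 : t' = P ∨ t' = Q := by simpa using ht'
  rcases h1 with h1 | h1 <;> rcases h2 with h2 | h2
  · exact absurd (h1.trans h2.symm) hne
  · exact Or.inl ⟨h1, h2⟩
  · exact Or.inr ⟨h1, h2⟩
  · exact absurd (h1.trans h2.symm) hne

lemma disj_restrict {A B Z : Finset α} (h : A ∩ B = ∅) :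
    (A ∩ Z) ∩ (B ∩ Z) = ∅ := by
  rw [← subset_empty, ← h]
  intro x hx
  simp only [mem_inter] at hx ⊢
  exact ⟨hx.1.1, hx.2.1⟩

lemma inter_restrict_eq {Y R Z : Finset α} (hYZ : Y ⊆ Z) : Y ∩ (R ∩ Z) = Y ∩ R := by
  ext x
  simp only [mem_inter]
  exact ⟨fun h => ⟨h.1, h.2.1⟩, fun h => ⟨h.1, h.2, hYZ h.1⟩⟩

lemma card_inter_mono_right {Y R Z : Finset α} (h : 2 ≤ (Y ∩ (R ∩ Z)).card) :
    2 ≤ (Y ∩ R).card := by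
  refine le_trans h (card_le_card ?_)
  intro x hx
  simp only [mem_inter] at hx ⊢
  exact ⟨hx.1, hx.2.1⟩

lemma restrictSS_struct {X Z : Finset α} {𝒮 : Finset (Finset (Finset α))}
    (h𝒮 : IsSplitSystem X 𝒮) (hZX : Z ⊆ X) {T : Finset (Finset α)}
    (hT : T ∈ restrictSS 𝒮 Z) :
    ∃ S ∈ 𝒮, ∃ P Q : Finset α, S = {P, Q} ∧ T = {P ∩ Z, Q ∩ Z} ∧
      P ∩ Z ≠ ∅ ∧ Q ∩ Z ≠ ∅ ∧ (P ∩ Z) ∪ (Q ∩ Z) = Z ∧ (P ∩ Z) ∩ (Q ∩ Z) = ∅ ∧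
      P ∪ Q = X ∧ P ∩ Q = ∅ := by
  classical
  rw [restrictSS, mem_filter, mem_image] at hT
  obtain ⟨⟨S, hS, rfl⟩, hne⟩ := hT
  obtain ⟨P, Q, rfl, hunion, hinter, hP, hQ⟩ := h𝒮.1 S hS
  rw [restrictSplit_pair] at hne ⊢
  refine ⟨{P, Q}, hS, P, Q, rfl, rfl, ?_, ?_, ?_, disj_restrict hinter, hunion, hinter⟩
  · exact hne _ (mem_insert_self _ _)
  · exact hne _ (mem_insert_of_mem (mem_singleton_self _))
  · rw [← union_inter_distrib_right, hunion, inter_eq_right.mpr hZX]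

lemma mem_restrictSS_of_parts {Z : Finset α} {𝒮 : Finset (Finset (Finset α))}
    {S : Finset (Finset α)} (hS : S ∈ 𝒮) {P Q : Finset α} (hSpq : S = {P, Q})
    (hP : P ∩ Z ≠ ∅) (hQ : Q ∩ Z ≠ ∅) :
    ({P ∩ Z, Q ∩ Z} : Finset (Finset α)) ∈ restrictSS 𝒮 Z := by
  classical
  rw [restrictSS, mem_filter, mem_image]
  constructor
  · exact ⟨S, hS, by rw [hSpq, restrictSplit_pair]⟩
  · intro t ht
    rcases mem_insert.mp ht with rfl | ht
    · exact hP
    · rw [mem_singleton.mp ht]; exact hQ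

/- ### transfer lemmas -/

lemma phiNe_symm {Y1 Y2 : Finset α} {S : Finset (Finset α)} (h : phiNe Y1 Y2 S) :
    phiNe Y2 Y1 S := by
  obtain ⟨t, ht, t', ht', hne, h1, h2⟩ := h
  exact ⟨t', ht', t, ht, hne.symm, h2, h1⟩

lemma transfer_fwd {X Z Y1 Y2 : Finset α} {𝒮 : Finset (Finset (Finset α))}
    (h𝒮 : IsSplitSystem X 𝒮) (hY1 : Y1 ⊆ Z) (hY2 : Y2 ⊆ Z)
    {S : Finset (Finset α)} (hS : S ∈ 𝒮) (h : phiNe Y1 Y2 S) :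
    ∃ T ∈ restrictSS 𝒮 Z, phiNe Y1 Y2 T := by
  obtain ⟨P, Q, hSpq, hunion, hinter, hPne, hQne⟩ := h𝒮.1 S hS
  obtain ⟨t, ht, t', ht', hne, h1, h2⟩ := h
  rw [hSpq] at ht ht'
  have hQPinter : Q ∩ P = ∅ := by rw [inter_comm]; exact hinter
  rcases mem_pair_resolve ht ht' hne with ⟨rfl, rfl⟩ | ⟨rfl, rfl⟩
  · have h1' : 2 ≤ (Y1 ∩ (t ∩ Z)).card := by rw [inter_restrict_eq hY1]; exact h1
    have h2' : 2 ≤ (Y2 ∩ (t' ∩ Z)).card := by rw [inter_restrict_eq hY2]; exact h2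
    have htZ : t ∩ Z ≠ ∅ := ne_empty_of_two_le h1'
    have ht'Z : t' ∩ Z ≠ ∅ := ne_empty_of_two_le h2'
    exact ⟨{t ∩ Z, t' ∩ Z}, mem_restrictSS_of_parts hS hSpq htZ ht'Z,
      t ∩ Z, mem_insert_self _ _, t' ∩ Z, mem_insert_of_mem (mem_singleton_self _),
      ne_of_disj (disj_restrict hinter) htZ, h1', h2'⟩
  · have h1' : 2 ≤ (Y1 ∩ (t ∩ Z)).card := by rw [inter_restrict_eq hY1]; exact h1
    have h2' : 2 ≤ (Y2 ∩ (t' ∩ Z)).card := by rw [inter_restrict_eq hY2]; exact h2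
    have htZ : t ∩ Z ≠ ∅ := ne_empty_of_two_le h1'
    have ht'Z : t' ∩ Z ≠ ∅ := ne_empty_of_two_le h2'
    exact ⟨{t' ∩ Z, t ∩ Z}, mem_restrictSS_of_parts hS hSpq ht'Z htZ,
      t ∩ Z, mem_insert_of_mem (mem_singleton_self _), t' ∩ Z, mem_insert_self _ _,
      ne_of_disj (disj_restrict hQPinter) htZ, h1', h2'⟩

lemma transfer_rev {X Z Y1 Y2 : Finset α} {𝒮 : Finset (Finset (Finset α))}
    (h𝒮 : IsSplitSystem X 𝒮) (hZX : Z ⊆ X) (hY1 : Y1 ⊆ Z) (hY2 : Y2 ⊆ Z)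
    {T : Finset (Finset α)} (hT : T ∈ restrictSS 𝒮 Z) (h : phiNe Y1 Y2 T) :
    ∃ S ∈ 𝒮, phiNe Y1 Y2 S := by
  obtain ⟨S, hS, P, Q, hSpq, hTpq, hPne, hQne, hun, hdis, hPQun, hPQdis⟩ := restrictSS_struct h𝒮 hZX hT
  obtain ⟨t, ht, t', ht', hne, h1, h2⟩ := h
  rw [hTpq] at ht ht'
  refine ⟨S, hS, ?_⟩
  rcases mem_pair_resolve ht ht' hne with ⟨h1e, h2e⟩ | ⟨h1e, h2e⟩ <;> subst h1e <;> subst h2e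
  · have hPQ : P ≠ Q := fun e => hne (by rw [e])
    exact ⟨P, by rw [hSpq]; exact mem_insert_self _ _,
      Q, by rw [hSpq]; exact mem_insert_of_mem (mem_singleton_self _),
      hPQ, card_inter_mono_right h1, card_inter_mono_right h2⟩
  · have hPQ : Q ≠ P := fun e => hne (by rw [e])
    exact ⟨Q, by rw [hSpq]; exact mem_insert_of_mem (mem_singleton_self _),
      P, by rw [hSpq]; exact mem_insert_self _ _,
      hPQ, card_inter_mono_right h1, card_inter_mono_right h2⟩

/- structure of a phiNe witness inside a restriction -/
lemma phiNe_restrict_struct {X Z Y1 Y2 : Finset α} {𝒮 : Finset (Finset (Finset α))}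
    (h𝒮 : IsSplitSystem X 𝒮) (hZX : Z ⊆ X)
    {T : Finset (Finset α)} (hT : T ∈ restrictSS 𝒮 Z) (h : phiNe Y1 Y2 T) :
    ∃ A B : Finset α, T = {A, B} ∧ A ∪ B = Z ∧ A ∩ B = ∅ ∧
      2 ≤ (Y1 ∩ A).card ∧ 2 ≤ (Y2 ∩ B).card := by
  obtain ⟨S, hS, P, Q, hSpq, hTpq, hPne, hQne, hun, hdis, hPQun, hPQdis⟩ := restrictSS_struct h𝒮 hZX hT
  obtain ⟨t, ht, t', ht', hne, h1, h2⟩ := h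
  rw [hTpq] at ht ht' ⊢
  rcases mem_pair_resolve ht ht' hne with ⟨h1e, h2e⟩ | ⟨h1e, h2e⟩ <;> subst h1e <;> subst h2e
  · exact ⟨P ∩ Z, Q ∩ Z, rfl, hun, hdis, h1, h2⟩
  · exact ⟨Q ∩ Z, P ∩ Z, pair_comm _ _, by rw [union_comm]; exact hun,
      by rw [inter_comm]; exact hdis, h1, h2⟩


/- ### helpers for part sizes -/

lemma part_compl {A B Z : Finset α} (hun : A ∪ B = Z) (hdis : A ∩ B = ∅) : B = Z \ A := by
  have hd : Disjoint A B := disjoint_iff_inter_eq_empty.mpr hdis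
  rw [← hun, union_sdiff_cancel_left hd]

lemma part_cards {A B Z : Finset α} (hun : A ∪ B = Z) (hdis : A ∩ B = ∅) :
    A.card + B.card = Z.card := by
  rw [← hun, card_union_of_disjoint (disjoint_iff_inter_eq_empty.mpr hdis)]

lemma inter_card_split {Y A B Z : Finset α} (hun : A ∪ B = Z) (hdis : A ∩ B = ∅)
    (hYZ : Y ⊆ Z) : (Y ∩ A).card + (Y ∩ B).card = Y.card := by
  rw [← card_union_of_disjoint, ← inter_union_distrib_left, hun, inter_eq_left.mpr hYZ]
  exact Disjoint.mono inter_subset_right inter_subset_right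
    (disjoint_iff_inter_eq_empty.mpr hdis)

/- ### converse: |Y ∪ Y'| = 4 -/

lemma distinguish_of_four {X Y Y' : Finset α} {𝒮 : Finset (Finset (Finset α))}
    (h𝒮 : IsSplitSystem X 𝒮) (hYX : Y ⊆ X) (hY'X : Y' ⊆ X)
    (hY : Y.card = 3) (hY' : Y'.card = 3) (hZ : (Y ∪ Y').card = 4)
    (hF : FourDices X 𝒮) : ∃ S ∈ 𝒮, phiNe Y Y' S := by
  set Z := Y ∪ Y' with hZdef
  have hZX : Z ⊆ X := union_subset hYX hY'X
  have hYZ : Y ⊆ Z := subset_union_left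
  have hY'Z : Y' ⊆ Z := subset_union_right
  rcases hF with hF | hF
  · exact absurd (hZ ▸ card_le_card hZX) (by omega)
  obtain ⟨𝒯, h𝒯sub, h𝒯card, h𝒯r⟩ := hF Z hZX hZ
  have hint : (Y ∩ Y').card = 2 := by
    have h := card_union_add_card_inter Y Y'; rw [← hZdef] at h; omega
  have hYd : (Y \ Y').card = 1 := by
    have h := card_sdiff_add_card_inter Y Y'; omega
  have hY'd : (Y' \ Y).card = 1 := by
    have h := card_sdiff_add_card_inter Y' Y; rw [inter_comm] at h; omega
  obtain ⟨u, hu⟩ := card_eq_one.mp hYd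
  obtain ⟨v, hv⟩ := card_eq_one.mp hY'd
  have huY : u ∈ Y := (mem_sdiff.mp (hu ▸ mem_singleton_self u)).1
  have huY' : u ∉ Y' := (mem_sdiff.mp (hu ▸ mem_singleton_self u)).2
  have hvY' : v ∈ Y' := (mem_sdiff.mp (hv ▸ mem_singleton_self v)).1
  have hvY : v ∉ Y := (mem_sdiff.mp (hv ▸ mem_singleton_self v)).2
  have huv : u ≠ v := fun e => huY' (e ▸ hvY')
  have hZv : Z \ {v} = Y := by
    ext x
    simp only [mem_sdiff, mem_union, mem_singleton, hZdef]
    constructor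
    · rintro ⟨hx | hx, hxv⟩
      · exact hx
      · by_contra hxY
        have : x ∈ Y' \ Y := mem_sdiff.mpr ⟨hx, hxY⟩
        rw [hv, mem_singleton] at this; exact hxv this
    · intro hx; exact ⟨Or.inl hx, fun e => hvY (e ▸ hx)⟩
  have hZu : Z \ {u} = Y' := by
    ext x
    simp only [mem_sdiff, mem_union, mem_singleton, hZdef]
    constructor
    · rintro ⟨hx | hx, hxu⟩
      · by_contra hxY'
        have : x ∈ Y \ Y' := mem_sdiff.mpr ⟨hx, hxY'⟩
        rw [hu, mem_singleton] at this; exact hxu this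
      · exact hx
    · intro hx; exact ⟨Or.inr hx, fun e => huY' (e ▸ hx)⟩
  have key : ∀ T ∈ 𝒯, phiNe Y Y' T ∨ T = {{u, v}, Z \ {u, v}} := by
    intro T hT
    obtain ⟨⟨A, B, hTab, hun, hdis, hA, hB⟩, _, hall⟩ := h𝒯r T hT
    have hcards : A.card + B.card = 4 := by rw [part_cards hun hdis, hZ]
    have hA2 : 2 ≤ A.card := hall A (hTab ▸ mem_insert_self _ _)
    have hB2 : 2 ≤ B.card := hall B (hTab ▸ mem_insert_of_mem (mem_singleton_self _))
    have hAc : A.card = 2 := by omega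
    have hBc : B.card = 2 := by omega
    have hBZA : B = Z \ A := part_compl hun hdis
    have hsub : ∀ {x : α}, x ∈ A → x ∉ B := by
      intro x hxA hxB
      have : x ∈ A ∩ B := mem_inter.mpr ⟨hxA, hxB⟩
      rw [hdis] at this; exact notMem_empty x this
    have hsub' : ∀ {x : α}, x ∈ B → x ∉ A := by
      intro x hxB hxA; exact hsub hxA hxB
    have hmem : ∀ {x : α}, x ∈ Z → x ∉ A → x ∈ B := by
      intro x hxZ hxA
      rcases mem_union.mp (hun ▸ hxZ) with h | h
      · exact absurd h hxA
      · exact h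
    have hAZ : A ⊆ Z := hun ▸ subset_union_left
    have hBZ : B ⊆ Z := hun ▸ subset_union_right
    by_cases huA : u ∈ A
    · by_cases hvA : v ∈ A
      · right
        have hAuv : A = {u, v} := eq_pair_of_mem_of_card_two hAc huA hvA huv
        rw [hTab, hBZA, hAuv]
      · left
        have hvB : v ∈ B := hmem (hY'Z hvY') hvA
        have hAY : A ⊆ Y := by
          intro x hx
          rw [← hZv]
          exact mem_sdiff.mpr ⟨hAZ hx, fun e => hvA ((mem_singleton.mp e) ▸ hx)⟩
        have hBY' : B ⊆ Y' := by
          intro x hx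
          rw [← hZu]
          exact mem_sdiff.mpr ⟨hBZ hx, fun e => hsub huA ((mem_singleton.mp e) ▸ hx)⟩
        refine ⟨A, hTab ▸ mem_insert_self _ _, B,
          hTab ▸ mem_insert_of_mem (mem_singleton_self _), ne_of_disj hdis hA, ?_, ?_⟩
        · rw [inter_eq_right.mpr hAY, hAc]
        · rw [inter_eq_right.mpr hBY', hBc]
    · have huB : u ∈ B := hmem (hYZ huY) huA
      by_cases hvA : v ∈ A
      · left
        have hBY : B ⊆ Y := by
          intro x hx
          rw [← hZv]
          exact mem_sdiff.mpr ⟨hBZ hx, fun e => hsub hvA ((mem_singleton.mp e) ▸ hx)⟩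
        have hAY' : A ⊆ Y' := by
          intro x hx
          rw [← hZu]
          exact mem_sdiff.mpr ⟨hAZ hx, fun e => huA ((mem_singleton.mp e) ▸ hx)⟩
        refine ⟨B, hTab ▸ mem_insert_of_mem (mem_singleton_self _), A,
          hTab ▸ mem_insert_self _ _, ?_, ?_, ?_⟩
        · exact fun e => (ne_of_disj hdis hA) e.symm
        · rw [inter_eq_right.mpr hBY, hBc]
        · rw [inter_eq_right.mpr hAY', hAc]
      · right
        have hvB : v ∈ B := hmem (hY'Z hvY') hvA
        have hBuv : B = {u, v} := eq_pair_of_mem_of_card_two hBc huB hvB huv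
        have hAZB : A = Z \ B := by
          refine part_compl ?_ ?_
          · rw [union_comm]; exact hun
          · rw [inter_comm]; exact hdis
        rw [hTab, hAZB, hBuv, pair_comm]
  obtain ⟨T1, hT1, T2, hT2, hT12⟩ := Finset.one_lt_card.mp h𝒯card
  rcases key T1 hT1 with h1 | h1
  · exact transfer_rev h𝒮 hZX hYZ hY'Z (h𝒯sub hT1) h1
  rcases key T2 hT2 with h2 | h2
  · exact transfer_rev h𝒮 hZX hYZ hY'Z (h𝒯sub hT2) h2
  exact absurd (h1.trans h2.symm) hT12

/- ### converse: |Y ∪ Y'| = 5 -/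

lemma distinguish_of_five {X Y Y' : Finset α} {𝒮 : Finset (Finset (Finset α))}
    (h𝒮 : IsSplitSystem X 𝒮) (hYX : Y ⊆ X) (hY'X : Y' ⊆ X)
    (hY : Y.card = 3) (hY' : Y'.card = 3) (hZ : (Y ∪ Y').card = 5)
    (hF : FiveDices X 𝒮) : ∃ S ∈ 𝒮, phiNe Y Y' S := by
  set Z := Y ∪ Y' with hZdef
  have hZX : Z ⊆ X := union_subset hYX hY'X
  have hYZ : Y ⊆ Z := subset_union_left
  have hY'Z : Y' ⊆ Z := subset_union_right
  rcases hF with hF | hF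
  · exact absurd (hZ ▸ card_le_card hZX) (by omega)
  obtain ⟨𝒯, h𝒯sub, h𝒯card, h𝒯r⟩ := hF Z hZX hZ
  have hint : (Y ∩ Y').card = 1 := by
    have h := card_union_add_card_inter Y Y'; rw [← hZdef] at h; omega
  have hYd : (Y \ Y').card = 2 := by
    have h := card_sdiff_add_card_inter Y Y'; omega
  have hY'd : (Y' \ Y).card = 2 := by
    have h := card_sdiff_add_card_inter Y' Y; rw [inter_comm] at h; omega
  by_contra hcon
  push_neg at hcon
  -- every T in 𝒯 has its 2-part crossing between Y\Y' and Y'\Y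
  have key : ∀ T ∈ 𝒯, ∃ A : Finset α, T = {A, Z \ A} ∧ A.card = 2 ∧ A ⊆ Z ∧
      ¬A ⊆ Y ∧ ¬A ⊆ Y' := by
    intro T hT
    obtain ⟨⟨A, B, hTab, hun, hdis, hAne, hBne⟩, hex, hall⟩ := h𝒯r T hT
    have hcards : A.card + B.card = 5 := by rw [part_cards hun hdis, hZ]
    have hA2 : 2 ≤ A.card := hall A (hTab ▸ mem_insert_self _ _)
    have hB2 : 2 ≤ B.card := hall B (hTab ▸ mem_insert_of_mem (mem_singleton_self _))
    -- the small part
    have main : ∀ C D : Finset α, C ∪ D = Z → C ∩ D = ∅ → C.card = 2 → D.card = 3 →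
        T = {C, D} → ∃ A : Finset α, T = {A, Z \ A} ∧ A.card = 2 ∧ A ⊆ Z ∧
          ¬A ⊆ Y ∧ ¬A ⊆ Y' := by
      intro C D hun hdis hC hD hTcd
      have hDZC : D = Z \ C := part_compl hun hdis
      have hCZ : C ⊆ Z := hun ▸ subset_union_left
      have hCne : C ≠ ∅ := by
        intro e; rw [e] at hC; simp at hC
      refine ⟨C, by rw [hTcd, hDZC], hC, hCZ, ?_, ?_⟩
      · intro hCY
        have hphi : phiNe Y Y' T := by
          have hsplit := inter_card_split hun hdis hY'Z
          have hle : (Y' ∩ C).card ≤ 1 := by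
            have hsubint : Y' ∩ C ⊆ Y ∩ Y' := by
              intro x hx
              rw [mem_inter] at hx ⊢
              exact ⟨hCY hx.2, hx.1⟩
            have := card_le_card hsubint
            omega
          refine ⟨C, hTcd ▸ mem_insert_self _ _, D,
            hTcd ▸ mem_insert_of_mem (mem_singleton_self _), ne_of_disj hdis hCne, ?_, ?_⟩
          · rw [inter_eq_right.mpr hCY, hC]
          · omega
        obtain ⟨S, hS, hSphi⟩ := transfer_rev h𝒮 hZX hYZ hY'Z (h𝒯sub hT) hphi
        exact hcon S hS hSphi
      · intro hCY'
        have hphi : phiNe Y Y' T := by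
          have hsplit := inter_card_split hun hdis hYZ
          have hle : (Y ∩ C).card ≤ 1 := by
            have hsubint : Y ∩ C ⊆ Y ∩ Y' := by
              intro x hx
              rw [mem_inter] at hx ⊢
              exact ⟨hx.1, hCY' hx.2⟩
            have := card_le_card hsubint
            omega
          refine ⟨D, hTcd ▸ mem_insert_of_mem (mem_singleton_self _), C,
            hTcd ▸ mem_insert_self _ _, ?_, ?_, ?_⟩
          · exact fun e => (ne_of_disj hdis hCne) e.symm
          · omega
          · rw [inter_eq_right.mpr hCY', hC]
        obtain ⟨S, hS, hSphi⟩ := transfer_rev h𝒮 hZX hYZ hY'Z (h𝒯sub hT) hphi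
        exact hcon S hS hSphi
    obtain ⟨C, hCmem, hC2⟩ := hex
    have hCAB : C = A ∨ C = B := by
      have h := hTab ▸ hCmem; simpa using h
    rcases hCAB with rfl | rfl
    · exact main C B hun hdis hC2 (by omega) hTab
    · exact main C A (by rw [union_comm]; exact hun) (by rw [inter_comm]; exact hdis)
        hC2 (by omega) (by rw [hTab, pair_comm])
  -- counting: 𝒯 injects into crossing pairs
  have hsubD : 𝒯 ⊆ (((Y \ Y') ×ˢ (Y' \ Y)).image fun p => ({p.1, p.2} : Finset α)).image
      fun A => ({A, Z \ A} : Finset (Finset α)) := by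
    intro T hT
    obtain ⟨A, hTA, hAc, hAZ, hAY, hAY'⟩ := key T hT
    obtain ⟨s, hsA, hsY'⟩ := not_subset.mp hAY'
    obtain ⟨t, htA, htY⟩ := not_subset.mp hAY
    have hsY : s ∈ Y := by
      rcases mem_union.mp (hAZ hsA) with h | h
      · exact h
      · exact absurd h hsY'
    have htY' : t ∈ Y' := by
      rcases mem_union.mp (hAZ htA) with h | h
      · exact absurd h htY
      · exact h
    have hst : s ≠ t := fun e => htY (e ▸ hsY)
    have hApair : A = {s, t} := eq_pair_of_mem_of_card_two hAc hsA htA hst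
    rw [mem_image]
    refine ⟨A, ?_, hTA.symm⟩
    rw [mem_image]
    exact ⟨(s, t), mem_product.mpr ⟨mem_sdiff.mpr ⟨hsY, hsY'⟩, mem_sdiff.mpr ⟨htY', htY⟩⟩,
      hApair.symm⟩
  have hcard4 : 𝒯.card ≤ 4 := by
    calc 𝒯.card ≤ _ := card_le_card hsubD
    _ ≤ (((Y \ Y') ×ˢ (Y' \ Y)).image fun p => ({p.1, p.2} : Finset α)).card :=
        card_image_le
    _ ≤ ((Y \ Y') ×ˢ (Y' \ Y)).card := card_image_le
    _ = 4 := by rw [card_product, hYd, hY'd]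
  omega

/- ### converse: |Y ∪ Y'| = 6 -/

lemma distinguish_of_six {X Y Y' : Finset α} {𝒮 : Finset (Finset (Finset α))}
    (h𝒮 : IsSplitSystem X 𝒮) (hYX : Y ⊆ X) (hY'X : Y' ⊆ X)
    (hY : Y.card = 3) (hY' : Y'.card = 3) (hZ : (Y ∪ Y').card = 6)
    (hF : SixDices X 𝒮) : ∃ S ∈ 𝒮, phiNe Y Y' S := by
  set Z := Y ∪ Y' with hZdef
  have hZX : Z ⊆ X := union_subset hYX hY'X
  have hYZ : Y ⊆ Z := subset_union_left
  have hY'Z : Y' ⊆ Z := subset_union_right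
  rcases hF with hF | hF
  · exact absurd (hZ ▸ card_le_card hZX) (by omega)
  have hint : Y ∩ Y' = ∅ := by
    have h := card_union_add_card_inter Y Y'
    rw [← hZdef] at h
    exact card_eq_zero.mp (by omega)
  have hdisjYY : ∀ {x : α}, x ∈ Y → x ∉ Y' := by
    intro x hx hx'
    have : x ∈ Y ∩ Y' := mem_inter.mpr ⟨hx, hx'⟩
    rw [hint] at this; exact notMem_empty x this
  have hmem' : ∀ {x : α}, x ∈ Z → x ∉ Y → x ∈ Y' := by
    intro x hxZ hxY
    rcases mem_union.mp hxZ with h | h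
    · exact absurd h hxY
    · exact h
  rcases hF Z hZX hZ with ⟨T, hT, ⟨⟨A, B, hTab, hun, hdis, hAne, hBne⟩, hex, hall⟩⟩ | htri
  · -- a 3-split distinguishes
    have hcards : A.card + B.card = 6 := by rw [part_cards hun hdis, hZ]
    have hA3 : 3 ≤ A.card := hall A (hTab ▸ mem_insert_self _ _)
    have hB3 : 3 ≤ B.card := hall B (hTab ▸ mem_insert_of_mem (mem_singleton_self _))
    have hAc : A.card = 3 := by omega
    have hBc : B.card = 3 := by omega
    have hYsplit := inter_card_split hun hdis hYZ
    have hY'split := inter_card_split hun hdis hY'Z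
    -- (Y∩A) + (Y'∩A) = A.card  since Y, Y' partition Z ⊇ A
    have hApart : (Y ∩ A).card + (Y' ∩ A).card = 3 := by
      rw [← hAc, ← card_union_of_disjoint]
      · congr 1
        ext x
        simp only [mem_union, mem_inter]
        constructor
        · rintro (⟨h1, h2⟩ | ⟨h1, h2⟩) <;> exact h2
        · intro hx
          have hxZ : x ∈ Z := (hun ▸ subset_union_left) hx
          rcases mem_union.mp hxZ with h | h
          · exact Or.inl ⟨h, hx⟩
          · exact Or.inr ⟨h, hx⟩
      · exact Disjoint.mono inter_subset_left inter_subset_left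
          (disjoint_iff_inter_eq_empty.mpr hint)
    have hBpart : (Y ∩ B).card + (Y' ∩ B).card = 3 := by
      rw [← hBc, ← card_union_of_disjoint]
      · congr 1
        ext x
        simp only [mem_union, mem_inter]
        constructor
        · rintro (⟨h1, h2⟩ | ⟨h1, h2⟩) <;> exact h2
        · intro hx
          have hxZ : x ∈ Z := (hun ▸ subset_union_right) hx
          rcases mem_union.mp hxZ with h | h
          · exact Or.inl ⟨h, hx⟩
          · exact Or.inr ⟨h, hx⟩
      · exact Disjoint.mono inter_subset_left inter_subset_left
          (disjoint_iff_inter_eq_empty.mpr hint)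
    have hphi : phiNe Y Y' T := by
      rcases le_or_gt 2 ((Y ∩ A).card) with h2 | h2
      · refine ⟨A, hTab ▸ mem_insert_self _ _, B,
          hTab ▸ mem_insert_of_mem (mem_singleton_self _), ne_of_disj hdis hAne, h2, ?_⟩
        omega
      · refine ⟨B, hTab ▸ mem_insert_of_mem (mem_singleton_self _), A,
          hTab ▸ mem_insert_self _ _, fun e => (ne_of_disj hdis hAne) e.symm, ?_, ?_⟩
        · omega
        · omega
    exact transfer_rev h𝒮 hZX hYZ hY'Z hT hphi
  · obtain ⟨x, hx, y, hy, z, hz, hxy, hxz, hyz, hxyS, hxzS, hyzS⟩ := htri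
    -- helper: a pair inside Y distinguishes
    have pairPhiY : ∀ p q : α, p ∈ Y → q ∈ Y → p ≠ q →
        ({{p, q}, Z \ {p, q}} : Finset (Finset α)) ∈ restrictSS 𝒮 Z →
        ∃ S ∈ 𝒮, phiNe Y Y' S := by
      intro p q hp hq hpq hmem
      have h1 : Y ∩ {p, q} = {p, q} := inter_eq_right.mpr (by
        intro w hw; rcases mem_insert.mp hw with rfl | hw
        · exact hp
        · rw [mem_singleton.mp hw]; exact hq)
      have h2 : Y' ∩ (Z \ {p, q}) = Y' := by
        apply inter_eq_left.mpr
        intro w hw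
        refine mem_sdiff.mpr ⟨hY'Z hw, ?_⟩
        intro hwpq
        rcases mem_insert.mp hwpq with rfl | hwpq
        · exact hdisjYY hp hw
        · rw [mem_singleton.mp hwpq] at hw; exact hdisjYY hq hw
      have hphi : phiNe Y Y' ({{p, q}, Z \ {p, q}} : Finset (Finset α)) := by
        refine ⟨{p, q}, mem_insert_self _ _, Z \ {p, q},
          mem_insert_of_mem (mem_singleton_self _), ?_, ?_, ?_⟩
        · exact ne_of_disj (inter_sdiff_self _ _) (by
            intro e
            have := mem_insert_self p {q}
            rw [e] at this
            exact notMem_empty p this)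
        · rw [h1, card_pair hpq]
        · rw [h2, hY']; omega
      exact transfer_rev h𝒮 hZX hYZ hY'Z hmem hphi
    have pairPhiY' : ∀ p q : α, p ∈ Y' → q ∈ Y' → p ≠ q →
        ({{p, q}, Z \ {p, q}} : Finset (Finset α)) ∈ restrictSS 𝒮 Z →
        ∃ S ∈ 𝒮, phiNe Y Y' S := by
      intro p q hp hq hpq hmem
      have h1 : Y' ∩ {p, q} = {p, q} := inter_eq_right.mpr (by
        intro w hw; rcases mem_insert.mp hw with rfl | hw
        · exact hp
        · rw [mem_singleton.mp hw]; exact hq)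
      have h2 : Y ∩ (Z \ {p, q}) = Y := by
        apply inter_eq_left.mpr
        intro w hw
        refine mem_sdiff.mpr ⟨hYZ hw, ?_⟩
        intro hwpq
        rcases mem_insert.mp hwpq with rfl | hwpq
        · exact hdisjYY hw hp
        · rw [mem_singleton.mp hwpq] at hw; exact hdisjYY hw hq
      have hphi : phiNe Y Y' ({{p, q}, Z \ {p, q}} : Finset (Finset α)) := by
        refine ⟨Z \ {p, q}, mem_insert_of_mem (mem_singleton_self _), {p, q},
          mem_insert_self _ _, ?_, ?_, ?_⟩
        · intro e
          have hpm := mem_insert_self p {q}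
          rw [← e] at hpm
          exact (mem_sdiff.mp hpm).2 (mem_insert_self p {q})
        · rw [h2, hY]; omega
        · rw [h1, card_pair hpq]
      exact transfer_rev h𝒮 hZX hYZ hY'Z hmem hphi
    by_cases hxY : x ∈ Y
    · by_cases hyY : y ∈ Y
      · exact pairPhiY x y hxY hyY hxy hxyS
      · by_cases hzY : z ∈ Y
        · exact pairPhiY x z hxY hzY hxz hxzS
        · exact pairPhiY' y z (hmem' hy hyY) (hmem' hz hzY) hyz hyzS
    · by_cases hyY : y ∈ Y
      · by_cases hzY : z ∈ Y
        · exact pairPhiY y z hyY hzY hyz hyzS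
        · exact pairPhiY' x z (hmem' hx hxY) (hmem' hz hzY) hxz hxzS
      · exact pairPhiY' x y (hmem' hx hxY) (hmem' hy hyY) hxy hxyS

lemma injective_of_dices {X : Finset α} {𝒮 : Finset (Finset (Finset α))}
    (h𝒮 : IsSplitSystem X 𝒮) (h4 : FourDices X 𝒮) (h5 : FiveDices X 𝒮)
    (h6 : SixDices X 𝒮) : IsInjective X 𝒮 := by
  intro Y Y' hYX hY'X hY hY' hne
  have hinter3 : (Y ∩ Y').card ≠ 3 := by
    intro h
    have h1 : Y ∩ Y' = Y := eq_of_subset_of_card_le inter_subset_left (by omega)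
    have h2 : Y ∩ Y' = Y' := eq_of_subset_of_card_le inter_subset_right (by omega)
    exact hne (h1.symm.trans h2)
  have hinterle : (Y ∩ Y').card ≤ 3 := le_trans (card_le_card inter_subset_left) (by omega)
  have hsum := card_union_add_card_inter Y Y'
  have hcases : (Y ∪ Y').card = 4 ∨ (Y ∪ Y').card = 5 ∨ (Y ∪ Y').card = 6 := by omega
  rcases hcases with h | h | h
  · exact distinguish_of_four h𝒮 hYX hY'X hY hY' h h4
  · exact distinguish_of_five h𝒮 hYX hY'X hY hY' h h5
  · exact distinguish_of_six h𝒮 hYX hY'X hY hY' h h6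

/- ### element extraction -/

lemma exists_four {Y : Finset α} (h : Y.card = 4) :
    ∃ a b c d : α, a ≠ b ∧ a ≠ c ∧ a ≠ d ∧ b ≠ c ∧ b ≠ d ∧ c ≠ d ∧ Y = {a, b, c, d} := by
  obtain ⟨a, t, hat, rfl, ht⟩ := Finset.card_eq_succ.mp h
  obtain ⟨b, c, d, hbc, hbd, hcd, rfl⟩ := Finset.card_eq_three.mp ht
  simp only [mem_insert, mem_singleton] at hat
  push_neg at hat
  exact ⟨a, b, c, d, hat.1, hat.2.1, hat.2.2, hbc, hbd, hcd, rfl⟩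

lemma exists_five {Y : Finset α} (h : Y.card = 5) :
    ∃ a b c d e : α, a ≠ b ∧ a ≠ c ∧ a ≠ d ∧ a ≠ e ∧ b ≠ c ∧ b ≠ d ∧ b ≠ e ∧
      c ≠ d ∧ c ≠ e ∧ d ≠ e ∧ Y = {a, b, c, d, e} := by
  obtain ⟨a, t, hat, rfl, ht⟩ := Finset.card_eq_succ.mp h
  obtain ⟨b, c, d, e, h1, h2, h3, h4, h5, h6, rfl⟩ := exists_four ht
  simp only [mem_insert, mem_singleton] at hat
  push_neg at hat
  exact ⟨a, b, c, d, e, hat.1, hat.2.1, hat.2.2.1, hat.2.2.2, h1, h2, h3, h4, h5, h6, rfl⟩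

lemma exists_six {Y : Finset α} (h : Y.card = 6) :
    ∃ a b c d e f : α, a ≠ b ∧ a ≠ c ∧ a ≠ d ∧ a ≠ e ∧ a ≠ f ∧ b ≠ c ∧ b ≠ d ∧ b ≠ e ∧
      b ≠ f ∧ c ≠ d ∧ c ≠ e ∧ c ≠ f ∧ d ≠ e ∧ d ≠ f ∧ e ≠ f ∧ Y = {a, b, c, d, e, f} := by
  obtain ⟨a, t, hat, rfl, ht⟩ := Finset.card_eq_succ.mp h
  obtain ⟨b, c, d, e, f, h1, h2, h3, h4, h5, h6, h7, h8, h9, h10, rfl⟩ := exists_five ht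
  simp only [mem_insert, mem_singleton] at hat
  push_neg at hat
  exact ⟨a, b, c, d, e, f, hat.1, hat.2.1, hat.2.2.1, hat.2.2.2.1, hat.2.2.2.2,
    h1, h2, h3, h4, h5, h6, h7, h8, h9, h10, rfl⟩

/- ### forward: 4-dicing -/

lemma four_inst {X : Finset α} {𝒮 : Finset (Finset (Finset α))}
    (h𝒮 : IsSplitSystem X 𝒮) (hinj : IsInjective X 𝒮) {Y : Finset α} (hYX : Y ⊆ X)
    (hYc : Y.card = 4) {p q u v : α} (hY : Y = {p, q, u, v})
    (hpq : p ≠ q) (hpu : p ≠ u) (hpv : p ≠ v) (hqu : q ≠ u) (hqv : q ≠ v) (huv : u ≠ v) :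
    ∃ T ∈ restrictSS 𝒮 Y, IsRSplit Y 2 T ∧
      (T = {({p, u} : Finset α), {q, v}} ∨ T = {({q, u} : Finset α), {p, v}}) := by
  have hY1sub : ({p, q, u} : Finset α) ⊆ Y := by
    rw [hY]; intro w hw
    simp only [mem_insert, mem_singleton] at hw ⊢; tauto
  have hY2sub : ({p, q, v} : Finset α) ⊆ Y := by
    rw [hY]; intro w hw
    simp only [mem_insert, mem_singleton] at hw ⊢; tauto
  have hY1c : ({p, q, u} : Finset α).card = 3 := card3 hpq hpu hqu
  have hY2c : ({p, q, v} : Finset α).card = 3 := card3 hpq hpv hqv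
  have hne12 : ({p, q, u} : Finset α) ≠ {p, q, v} := by
    apply ne_of_mem_not_mem (show u ∈ ({p, q, u} : Finset α) by simp)
    simp only [mem_insert, mem_singleton]
    push_neg
    exact ⟨fun e => hpu e.symm, fun e => hqu e.symm, huv⟩
  obtain ⟨S, hS, hphi⟩ := hinj {p, q, u} {p, q, v} (hY1sub.trans hYX) (hY2sub.trans hYX)
    hY1c hY2c hne12
  obtain ⟨T, hT, hphiT⟩ := transfer_fwd h𝒮 hY1sub hY2sub hS hphi
  obtain ⟨A, B, hTab, hun, hdis, h1, h2⟩ := phiNe_restrict_struct h𝒮 hYX hT hphiT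
  have hAcard : 2 ≤ A.card := le_trans h1 (card_le_card inter_subset_right)
  have hBcard : 2 ≤ B.card := le_trans h2 (card_le_card inter_subset_right)
  have hsum : A.card + B.card = 4 := by rw [part_cards hun hdis, hYc]
  have hAc : A.card = 2 := by omega
  have hBc : B.card = 2 := by omega
  have hAY1 : A ⊆ {p, q, u} := by
    have hsub : ({p, q, u} : Finset α) ∩ A ⊆ A := inter_subset_right
    have hc : A.card ≤ (({p, q, u} : Finset α) ∩ A).card := hAc ▸ h1
    have he := eq_of_subset_of_card_le hsub hc
    rw [← he]; exact inter_subset_left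
  have hBY2 : B ⊆ {p, q, v} := by
    have hsub : ({p, q, v} : Finset α) ∩ B ⊆ B := inter_subset_right
    have hc : B.card ≤ (({p, q, v} : Finset α) ∩ B).card := hBc ▸ h2
    have he := eq_of_subset_of_card_le hsub hc
    rw [← he]; exact inter_subset_left
  have hmemB : ∀ {x : α}, x ∈ Y → x ∉ A → x ∈ B := by
    intro x hxY hxA
    rcases mem_union.mp (hun ▸ hxY) with h | h
    · exact absurd h hxA
    · exact h
  have hdisAB : ∀ {x : α}, x ∈ A → x ∉ B := by
    intro x hxA hxB
    have : x ∈ A ∩ B := mem_inter.mpr ⟨hxA, hxB⟩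
    rw [hdis] at this; exact notMem_empty x this
  have hsplit : IsRSplit Y 2 T := by
    refine ⟨⟨A, B, hTab, hun, hdis, ?_, ?_⟩, ⟨A, hTab ▸ mem_insert_self _ _, hAc⟩, ?_⟩
    · intro e; rw [e] at hAc; simp at hAc
    · intro e; rw [e] at hBc; simp at hBc
    · intro C hC
      have : C = A ∨ C = B := by rw [hTab] at hC; simpa using hC
      rcases this with rfl | rfl
      · omega
      · omega
  have huY : u ∈ Y := hY1sub (by simp)
  have hvY : v ∈ Y := hY2sub (by simp)
  have hqY : q ∈ Y := hY1sub (by simp)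
  have hpY : p ∈ Y := hY1sub (by simp)
  rcases two_subset_of_three hAY1 hAc with hApq | hApu | hAqu
  · -- A = {p,q} impossible: u would be in B ⊆ {p,q,v}
    exfalso
    have huA : u ∉ A := by
      rw [hApq]
      simp only [mem_insert, mem_singleton]
      push_neg
      exact ⟨fun e => hpu e.symm, fun e => hqu e.symm⟩
    have huB : u ∈ B := hmemB huY huA
    have := hBY2 huB
    simp only [mem_insert, mem_singleton] at this
    rcases this with h | h | h
    · exact hpu h.symm
    · exact hqu h.symm
    · exact huv h
  · -- A = {p,u}, B = {q,v}
    have hqA : q ∉ A := by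
      rw [hApu]; simp only [mem_insert, mem_singleton]; push_neg
      exact ⟨fun e => hpq e.symm, fun e => hqu e⟩
    have hvA : v ∉ A := by
      rw [hApu]; simp only [mem_insert, mem_singleton]; push_neg
      exact ⟨fun e => hpv e.symm, fun e => huv e.symm⟩
    have hB : B = {q, v} := eq_pair_of_mem_of_card_two hBc (hmemB hqY hqA) (hmemB hvY hvA) hqv
    exact ⟨T, hT, hsplit, Or.inl (by rw [hTab, hApu, hB])⟩
  · -- A = {q,u}, B = {p,v}
    have hpA : p ∉ A := by
      rw [hAqu]; simp only [mem_insert, mem_singleton]; push_neg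
      exact ⟨hpq, hpu⟩
    have hvA : v ∉ A := by
      rw [hAqu]; simp only [mem_insert, mem_singleton]; push_neg
      exact ⟨fun e => hqv e.symm, fun e => huv e.symm⟩
    have hB : B = {p, v} := eq_pair_of_mem_of_card_two hBc (hmemB hpY hpA) (hmemB hvY hvA) hpv
    exact ⟨T, hT, hsplit, Or.inr (by rw [hTab, hAqu, hB])⟩

lemma fourDices_of_injective {X : Finset α} {𝒮 : Finset (Finset (Finset α))}
    (h𝒮 : IsSplitSystem X 𝒮) (hinj : IsInjective X 𝒮) : FourDices X 𝒮 := by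
  right
  intro Y hYX hYc
  obtain ⟨a, b, c, d, hab, hac, had, hbc, hbd, hcd, hY⟩ := exists_four hYc
  -- three instances
  have hY2 : Y = {a, c, b, d} := by
    rw [hY]; ext x; simp only [mem_insert, mem_singleton]; tauto
  have hY3 : Y = {a, d, b, c} := by
    rw [hY]; ext x; simp only [mem_insert, mem_singleton]; tauto
  obtain ⟨S1, hS1m, hS1r, hS1o⟩ := four_inst h𝒮 hinj hYX hYc hY hab hac had hbc hbd hcd
  obtain ⟨S2, hS2m, hS2r, hS2o⟩ := four_inst h𝒮 hinj hYX hYc hY2 hac hab had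
    (fun e => hbc e.symm) hcd hbd
  obtain ⟨S3, hS3m, hS3r, hS3o⟩ := four_inst h𝒮 hinj hYX hYc hY3 had hab hac
    (fun e => hbd e.symm) (fun e => hcd e.symm) hbc
  -- normalize the split forms
  -- S1 ∈ {O1 := {{a,c},{b,d}}, O2 := {{b,c},{a,d}}}  (from {a,c},{b,d} / {b,c},{a,d})
  -- S2 options: {{a,b},{c,d}} =: O3  /  {{c,b},{a,d}} = O2
  -- S3 options: {{a,b},{d,c}} = O3  /  {{d,b},{a,c}} = {{b,d},{a,c}} = O1
  have hcb : ({c, b} : Finset α) = {b, c} := pair_comm c b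
  have hdc : ({d, c} : Finset α) = {c, d} := pair_comm d c
  have hdb : ({d, b} : Finset α) = {b, d} := pair_comm d b
  rw [hcb] at hS2o
  rw [hdc, hdb] at hS3o
  have hS3o' : S3 = {({a, b} : Finset α), {c, d}} ∨ S3 = {({a, c} : Finset α), {b, d}} := by
    rcases hS3o with h | h
    · exact Or.inl h
    · exact Or.inr (by rw [h, pair_comm])
  -- split distinctness
  have hO12 : ({({a, c} : Finset α), {b, d}} : Finset (Finset α)) ≠ {{b, c}, {a, d}} := by
    apply ne_of_mem_not_mem (mem_insert_self _ _)
    simp only [mem_insert, mem_singleton]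
    push_neg
    constructor
    · exact pair_ne_left (by simp only [mem_insert, mem_singleton]; push_neg; exact ⟨hab, hac⟩)
    · exact pair_ne_right (by simp only [mem_insert, mem_singleton]; push_neg; exact ⟨fun e => hac e.symm, fun e => hcd e⟩)
  have hO13 : ({({a, c} : Finset α), {b, d}} : Finset (Finset α)) ≠ {{a, b}, {c, d}} := by
    apply ne_of_mem_not_mem (mem_insert_self _ _)
    simp only [mem_insert, mem_singleton]
    push_neg
    constructor
    · exact pair_ne_right (by simp only [mem_insert, mem_singleton]; push_neg; exact ⟨fun e => hac e.symm, fun e => hbc e.symm⟩)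
    · exact pair_ne_left (by simp only [mem_insert, mem_singleton]; push_neg; exact ⟨hac, had⟩)
  have hO23 : ({({b, c} : Finset α), {a, d}} : Finset (Finset α)) ≠ {{a, b}, {c, d}} := by
    apply ne_of_mem_not_mem (mem_insert_self _ _)
    simp only [mem_insert, mem_singleton]
    push_neg
    constructor
    · exact pair_ne_right (by simp only [mem_insert, mem_singleton]; push_neg; exact ⟨fun e => hac e.symm, fun e => hbc e.symm⟩)
    · exact pair_ne_left (by simp only [mem_insert, mem_singleton]; push_neg; exact ⟨hbc, hbd⟩)
  have finish : ∀ T1 T2 : Finset (Finset α), T1 ∈ restrictSS 𝒮 Y → T2 ∈ restrictSS 𝒮 Y →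
      IsRSplit Y 2 T1 → IsRSplit Y 2 T2 → T1 ≠ T2 →
      ∃ 𝒯 ⊆ restrictSS 𝒮 Y, 2 ≤ 𝒯.card ∧ ∀ S ∈ 𝒯, IsRSplit Y 2 S := by
    intro T1 T2 h1 h2 r1 r2 hne
    refine ⟨{T1, T2}, ?_, ?_, ?_⟩
    · intro T hT
      rcases mem_insert.mp hT with rfl | hT
      · exact h1
      · rw [mem_singleton.mp hT]; exact h2
    · rw [card_pair hne]
    · intro T hT
      rcases mem_insert.mp hT with rfl | hT
      · exact r1
      · rw [mem_singleton.mp hT]; exact r2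
  rcases hS1o with h1 | h1 <;> rcases hS2o with h2 | h2
  · -- S1 = O1, S2 = O3
    exact finish S1 S2 hS1m hS2m hS1r hS2r (by rw [h1, h2]; exact hO13)
  · -- S1 = O1, S2 = O2
    exact finish S1 S2 hS1m hS2m hS1r hS2r (by rw [h1, h2]; exact hO12)
  · -- S1 = O2, S2 = O3
    exact finish S1 S2 hS1m hS2m hS1r hS2r (by rw [h1, h2]; exact hO23)
  · -- S1 = O2 = S2; use S3
    rcases hS3o' with h3 | h3
    · exact finish S1 S3 hS1m hS3m hS1r hS3r (by rw [h1, h3]; exact hO23)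
    · exact finish S1 S3 hS1m hS3m hS1r hS3r
        (by rw [h1, h3]; exact fun e => hO12 e.symm)

/- ### forward: 5-subset pair analysis -/

lemma char5 {X Z Y1 Y2 : Finset α} {𝒮 : Finset (Finset (Finset α))}
    (h𝒮 : IsSplitSystem X 𝒮) (hZX : Z ⊆ X) (hZc : Z.card = 5)
    (hY1 : Y1 ⊆ Z) (hY2 : Y2 ⊆ Z) (hY1c : Y1.card = 3) (hY2c : Y2.card = 3)
    {T : Finset (Finset α)} (hT : T ∈ restrictSS 𝒮 Z) (hphi : phiNe Y1 Y2 T) :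
    ∃ A : Finset α, A ⊆ Z ∧ A.card = 2 ∧
      ({A, Z \ A} : Finset (Finset α)) ∈ restrictSS 𝒮 Z ∧
      ((A ⊆ Y1 ∧ ¬A ⊆ Y2) ∨ (A ⊆ Y2 ∧ ¬A ⊆ Y1)) := by
  obtain ⟨A, B, hTab, hun, hdis, h1, h2⟩ := phiNe_restrict_struct h𝒮 hZX hT hphi
  have hAcard : 2 ≤ A.card := le_trans h1 (card_le_card inter_subset_right)
  have hBcard : 2 ≤ B.card := le_trans h2 (card_le_card inter_subset_right)
  have hsum : A.card + B.card = 5 := by rw [part_cards hun hdis, hZc]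
  have hAZ : A ⊆ Z := hun ▸ subset_union_left
  have hBZ : B ⊆ Z := hun ▸ subset_union_right
  have hs1 := inter_card_split hun hdis hY1
  have hs2 := inter_card_split hun hdis hY2
  rcases (by omega : A.card = 2 ∨ B.card = 2) with hAc | hBc
  · -- A is the small part, A ⊆ Y1
    have hAY1 : A ⊆ Y1 := by
      have hsub : Y1 ∩ A ⊆ A := inter_subset_right
      have hc : A.card ≤ (Y1 ∩ A).card := hAc ▸ h1
      have he := eq_of_subset_of_card_le hsub hc
      rw [← he]; exact inter_subset_left
    refine ⟨A, hAZ, hAc, ?_, Or.inl ⟨hAY1, ?_⟩⟩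
    · rw [← part_compl hun hdis, ← hTab]; exact hT
    · intro hAY2
      have : Y2 ∩ A = A := inter_eq_right.mpr hAY2
      rw [this, hAc] at hs2
      omega
  · have hBY2 : B ⊆ Y2 := by
      have hsub : Y2 ∩ B ⊆ B := inter_subset_right
      have hc : B.card ≤ (Y2 ∩ B).card := hBc ▸ h2
      have he := eq_of_subset_of_card_le hsub hc
      rw [← he]; exact inter_subset_left
    refine ⟨B, hBZ, hBc, ?_, Or.inr ⟨hBY2, ?_⟩⟩
    · have hAZB : A = Z \ B :=
        part_compl (by rw [union_comm]; exact hun) (by rw [inter_comm]; exact hdis)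
      rw [← hAZB, ← pair_comm, ← hTab]; exact hT
    · intro hBY1
      have : Y1 ∩ B = B := inter_eq_right.mpr hBY1
      rw [this, hBc] at hs1
      omega

lemma lemC1 {X Z : Finset α} {𝒮 : Finset (Finset (Finset α))}
    (h𝒮 : IsSplitSystem X 𝒮) (hinj : IsInjective X 𝒮) (hZX : Z ⊆ X) (hZc : Z.card = 5)
    {p q u v : α} (hp : p ∈ Z) (hq : q ∈ Z) (hu : u ∈ Z) (hv : v ∈ Z)
    (h1 : p ≠ q) (h2 : p ≠ u) (h3 : p ≠ v) (h4 : q ≠ u) (h5 : q ≠ v) (h6 : u ≠ v) :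
    ({({p, u} : Finset α), Z \ {p, u}} : Finset (Finset α)) ∈ restrictSS 𝒮 Z ∨
    ({({q, u} : Finset α), Z \ {q, u}} : Finset (Finset α)) ∈ restrictSS 𝒮 Z ∨
    ({({p, v} : Finset α), Z \ {p, v}} : Finset (Finset α)) ∈ restrictSS 𝒮 Z ∨
    ({({q, v} : Finset α), Z \ {q, v}} : Finset (Finset α)) ∈ restrictSS 𝒮 Z := by
  have hY1 : ({p, q, u} : Finset α) ⊆ Z := by
    rw [insert_subset_iff, insert_subset_iff, singleton_subset_iff]; exact ⟨hp, hq, hu⟩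
  have hY2 : ({p, q, v} : Finset α) ⊆ Z := by
    rw [insert_subset_iff, insert_subset_iff, singleton_subset_iff]; exact ⟨hp, hq, hv⟩
  have hY1c := card3 h1 h2 h4
  have hY2c := card3 h1 h3 h5
  have hne12 : ({p, q, u} : Finset α) ≠ {p, q, v} := by
    apply ne_of_mem_not_mem (show u ∈ ({p, q, u} : Finset α) by simp)
    simp only [mem_insert, mem_singleton]; push_neg
    exact ⟨fun e => h2 e.symm, fun e => h4 e.symm, h6⟩
  obtain ⟨S, hS, hphi⟩ := hinj _ _ (hY1.trans hZX) (hY2.trans hZX) hY1c hY2c hne12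
  obtain ⟨T, hT, hphiT⟩ := transfer_fwd h𝒮 hY1 hY2 hS hphi
  obtain ⟨A, hAZ, hAc, hAmem, hor⟩ := char5 h𝒮 hZX hZc hY1 hY2 hY1c hY2c hT hphiT
  rcases hor with ⟨hsub, hnsub⟩ | ⟨hsub, hnsub⟩
  · rcases two_subset_of_three hsub hAc with rfl | rfl | rfl
    · exact absurd (by intro x hx; simp only [mem_insert, mem_singleton] at hx ⊢; tauto) hnsub
    · exact Or.inl hAmem
    · exact Or.inr (Or.inl hAmem)
  · rcases two_subset_of_three hsub hAc with rfl | rfl | rfl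
    · exact absurd (by intro x hx; simp only [mem_insert, mem_singleton] at hx ⊢; tauto) hnsub
    · exact Or.inr (Or.inr (Or.inl hAmem))
    · exact Or.inr (Or.inr (Or.inr hAmem))

lemma lemC2 {X Z : Finset α} {𝒮 : Finset (Finset (Finset α))}
    (h𝒮 : IsSplitSystem X 𝒮) (hinj : IsInjective X 𝒮) (hZX : Z ⊆ X) (hZc : Z.card = 5)
    {x b c d e : α} (hxm : x ∈ Z) (hbm : b ∈ Z) (hcm : c ∈ Z) (hdm : d ∈ Z) (hem : e ∈ Z)
    (h1 : x ≠ b) (h2 : x ≠ c) (h3 : x ≠ d) (h4 : x ≠ e) (h5 : b ≠ c) (h6 : b ≠ d)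
    (h7 : b ≠ e) (h8 : c ≠ d) (h9 : c ≠ e) (h10 : d ≠ e) :
    ({({x, b} : Finset α), Z \ {x, b}} : Finset (Finset α)) ∈ restrictSS 𝒮 Z ∨
    ({({x, c} : Finset α), Z \ {x, c}} : Finset (Finset α)) ∈ restrictSS 𝒮 Z ∨
    ({({b, c} : Finset α), Z \ {b, c}} : Finset (Finset α)) ∈ restrictSS 𝒮 Z ∨
    ({({x, d} : Finset α), Z \ {x, d}} : Finset (Finset α)) ∈ restrictSS 𝒮 Z ∨
    ({({x, e} : Finset α), Z \ {x, e}} : Finset (Finset α)) ∈ restrictSS 𝒮 Z ∨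
    ({({d, e} : Finset α), Z \ {d, e}} : Finset (Finset α)) ∈ restrictSS 𝒮 Z := by
  have hY1 : ({x, b, c} : Finset α) ⊆ Z := by
    rw [insert_subset_iff, insert_subset_iff, singleton_subset_iff]; exact ⟨hxm, hbm, hcm⟩
  have hY2 : ({x, d, e} : Finset α) ⊆ Z := by
    rw [insert_subset_iff, insert_subset_iff, singleton_subset_iff]; exact ⟨hxm, hdm, hem⟩
  have hY1c := card3 h1 h2 h5
  have hY2c := card3 h3 h4 h10
  have hne12 : ({x, b, c} : Finset α) ≠ {x, d, e} := by
    apply ne_of_mem_not_mem (show b ∈ ({x, b, c} : Finset α) by simp)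
    simp only [mem_insert, mem_singleton]; push_neg
    exact ⟨fun e' => h1 e'.symm, h6, h7⟩
  obtain ⟨S, hS, hphi⟩ := hinj _ _ (hY1.trans hZX) (hY2.trans hZX) hY1c hY2c hne12
  obtain ⟨T, hT, hphiT⟩ := transfer_fwd h𝒮 hY1 hY2 hS hphi
  obtain ⟨A, hAZ, hAc, hAmem, hor⟩ := char5 h𝒮 hZX hZc hY1 hY2 hY1c hY2c hT hphiT
  rcases hor with ⟨hsub, _⟩ | ⟨hsub, _⟩
  · rcases two_subset_of_three hsub hAc with rfl | rfl | rfl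
    · exact Or.inl hAmem
    · exact Or.inr (Or.inl hAmem)
    · exact Or.inr (Or.inr (Or.inl hAmem))
  · rcases two_subset_of_three hsub hAc with rfl | rfl | rfl
    · exact Or.inr (Or.inr (Or.inr (Or.inl hAmem)))
    · exact Or.inr (Or.inr (Or.inr (Or.inr (Or.inl hAmem))))
    · exact Or.inr (Or.inr (Or.inr (Or.inr (Or.inr hAmem))))

lemma or4_bool {P1 P2 P3 P4 : Prop} [Decidable P1] [Decidable P2] [Decidable P3] [Decidable P4]
    (h : P1 ∨ P2 ∨ P3 ∨ P4) :
    (decide P1 || decide P2 || decide P3 || decide P4) = true := by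
  rcases h with h | h | h | h <;> simp [h]

lemma or6_bool {P1 P2 P3 P4 P5 P6 : Prop} [Decidable P1] [Decidable P2] [Decidable P3]
    [Decidable P4] [Decidable P5] [Decidable P6] (h : P1 ∨ P2 ∨ P3 ∨ P4 ∨ P5 ∨ P6) :
    (decide P1 || decide P2 || decide P3 || decide P4 || decide P5 || decide P6) = true := by
  rcases h with h | h | h | h | h | h <;> simp [h]

lemma countP_id_map {β : Type*} (f : β → Bool) (l : List β) :
    List.countP id (l.map f) = List.countP f l := by
  rw [List.countP_map]; rfl

lemma lift_pair {X Z W : Finset α} {𝒮 : Finset (Finset (Finset α))}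
    (h𝒮 : IsSplitSystem X 𝒮) (hWX : W ⊆ X) (hZW : Z ⊆ W)
    (hWc : W.card = 6) (hZc : Z.card = 5)
    (hno3 : ¬∃ T ∈ restrictSS 𝒮 W, IsRSplit W 3 T)
    {p : Finset α} (hpZ : p ⊆ Z) (hp2 : p.card = 2)
    (hmem : ({p, Z \ p} : Finset (Finset α)) ∈ restrictSS 𝒮 Z) :
    ({p, W \ p} : Finset (Finset α)) ∈ restrictSS 𝒮 W := by
  obtain ⟨S, hS, P, Q, hSpq, hTpq, hPne, hQne, hun, hdis, hPQun, hPQdis⟩ :=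
    restrictSS_struct h𝒮 (hZW.trans hWX) hmem
  have hsd : (Z \ p).card = 3 := by rw [card_sdiff_of_subset hpZ, hp2, hZc]
  have hpmem : p ∈ ({P ∩ Z, Q ∩ Z} : Finset (Finset α)) := hTpq ▸ mem_insert_self _ _
  have hsdmem : Z \ p ∈ ({P ∩ Z, Q ∩ Z} : Finset (Finset α)) :=
    hTpq ▸ mem_insert_of_mem (mem_singleton_self _)
  have hpne : p ≠ Z \ p := by
    intro e; rw [← e] at hsd; omega
  have main : ∀ P' Q' : Finset α, S = {P', Q'} → P' ∪ Q' = X → P' ∩ Q' = ∅ →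
      p = P' ∩ Z → Z \ p = Q' ∩ Z →
      ({p, W \ p} : Finset (Finset α)) ∈ restrictSS 𝒮 W := by
    intro P' Q' hSpq' hun' hdis' hp hq
    have hPW : p ⊆ P' ∩ W := by
      rw [hp]; intro x hx; rw [mem_inter] at hx ⊢; exact ⟨hx.1, hZW hx.2⟩
    have hQW : Z \ p ⊆ Q' ∩ W := by
      rw [hq]; intro x hx; rw [mem_inter] at hx ⊢; exact ⟨hx.1, hZW hx.2⟩
    have hunW : (P' ∩ W) ∪ (Q' ∩ W) = W := by
      rw [← union_inter_distrib_right, hun', inter_eq_right.mpr hWX]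
    have hdisW : (P' ∩ W) ∩ (Q' ∩ W) = ∅ := disj_restrict hdis'
    have hcardsW : (P' ∩ W).card + (Q' ∩ W).card = 6 := by
      rw [part_cards hunW hdisW, hWc]
    have hQW3 : 3 ≤ (Q' ∩ W).card := le_trans (le_of_eq hsd.symm) (card_le_card hQW)
    have hPW2 : 2 ≤ (P' ∩ W).card := le_trans (le_of_eq hp2.symm) (card_le_card hPW)
    have hPWne : P' ∩ W ≠ ∅ := by
      intro e; rw [e] at hPW2; simp at hPW2
    have hQWne : Q' ∩ W ≠ ∅ := by
      intro e
      rw [e] at hQW3; simp at hQW3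
    by_cases h3 : (P' ∩ W).card = 3
    · exfalso
      apply hno3
      refine ⟨{P' ∩ W, Q' ∩ W}, mem_restrictSS_of_parts hS hSpq' hPWne hQWne,
        ⟨P' ∩ W, Q' ∩ W, rfl, hunW, hdisW, hPWne, hQWne⟩,
        ⟨P' ∩ W, mem_insert_self _ _, h3⟩, ?_⟩
      intro A hA
      rcases mem_insert.mp hA with rfl | hA
      · omega
      · rw [mem_singleton.mp hA]; omega
    · have hPWc : (P' ∩ W).card = 2 := by omega
      have hPWp : p = P' ∩ W :=
        eq_of_subset_of_card_le hPW (by omega)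
      have hQWsd : Q' ∩ W = W \ p := by
        rw [hPWp]
        exact part_compl hunW hdisW
      have := mem_restrictSS_of_parts (Z := W) hS hSpq' hPWne hQWne
      rwa [← hPWp, hQWsd] at this
  rcases mem_pair_resolve hpmem hsdmem hpne with ⟨h1, h2⟩ | ⟨h1, h2⟩
  · exact main P Q hSpq hPQun hPQdis h1 h2
  · exact main Q P (by rw [hSpq, pair_comm]) (by rw [union_comm]; exact hPQun)
      (by rw [inter_comm]; exact hPQdis) h1 h2

lemma lemP6 {X W : Finset α} {𝒮 : Finset (Finset (Finset α))}
    (h𝒮 : IsSplitSystem X 𝒮) (hinj : IsInjective X 𝒮) (hWX : W ⊆ X) (hWc : W.card = 6)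
    (hno3 : ¬∃ T ∈ restrictSS 𝒮 W, IsRSplit W 3 T)
    {x y z u v w : α} (hxm : x ∈ W) (hym : y ∈ W) (hzm : z ∈ W)
    (hum : u ∈ W) (hvm : v ∈ W) (hwm : w ∈ W)
    (h1 : x ≠ y) (h2 : x ≠ z) (h3 : y ≠ z) (h4 : u ≠ v) (h5 : u ≠ w) (h6 : v ≠ w)
    (hY12 : ({x, y, z} : Finset α) ≠ {u, v, w}) :
    ({({x, y} : Finset α), W \ {x, y}} : Finset (Finset α)) ∈ restrictSS 𝒮 W ∨
    ({({x, z} : Finset α), W \ {x, z}} : Finset (Finset α)) ∈ restrictSS 𝒮 W ∨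
    ({({y, z} : Finset α), W \ {y, z}} : Finset (Finset α)) ∈ restrictSS 𝒮 W ∨
    ({({u, v} : Finset α), W \ {u, v}} : Finset (Finset α)) ∈ restrictSS 𝒮 W ∨
    ({({u, w} : Finset α), W \ {u, w}} : Finset (Finset α)) ∈ restrictSS 𝒮 W ∨
    ({({v, w} : Finset α), W \ {v, w}} : Finset (Finset α)) ∈ restrictSS 𝒮 W := by
  have hY1 : ({x, y, z} : Finset α) ⊆ W := by
    rw [insert_subset_iff, insert_subset_iff, singleton_subset_iff]; exact ⟨hxm, hym, hzm⟩
  have hY2 : ({u, v, w} : Finset α) ⊆ W := by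
    rw [insert_subset_iff, insert_subset_iff, singleton_subset_iff]; exact ⟨hum, hvm, hwm⟩
  have hY1c := card3 h1 h2 h3
  have hY2c := card3 h4 h5 h6
  obtain ⟨S, hS, hphi⟩ := hinj _ _ (hY1.trans hWX) (hY2.trans hWX) hY1c hY2c hY12
  obtain ⟨T, hT, hphiT⟩ := transfer_fwd h𝒮 hY1 hY2 hS hphi
  obtain ⟨A, B, hTab, hun, hdis, hphi1, hphi2⟩ := phiNe_restrict_struct h𝒮 hWX hT hphiT
  have hAcard : 2 ≤ A.card := le_trans hphi1 (card_le_card inter_subset_right)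
  have hBcard : 2 ≤ B.card := le_trans hphi2 (card_le_card inter_subset_right)
  have hsum : A.card + B.card = 6 := by rw [part_cards hun hdis, hWc]
  have hAne : A ≠ ∅ := by intro e; rw [e] at hAcard; simp at hAcard
  have hBne : B ≠ ∅ := by intro e; rw [e] at hBcard; simp at hBcard
  by_cases h3A : A.card = 3
  · exfalso
    apply hno3
    refine ⟨T, hT, ⟨A, B, hTab, hun, hdis, hAne, hBne⟩,
      ⟨A, hTab ▸ mem_insert_self _ _, h3A⟩, ?_⟩
    intro C hC
    rw [hTab] at hC
    rcases mem_insert.mp hC with rfl | hC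
    · omega
    · rw [mem_singleton.mp hC]; omega
  rcases (by omega : A.card = 2 ∨ B.card = 2) with hAc | hBc
  · have hAY1 : A ⊆ {x, y, z} := by
      have hsub : ({x, y, z} : Finset α) ∩ A ⊆ A := inter_subset_right
      have hc : A.card ≤ (({x, y, z} : Finset α) ∩ A).card := hAc ▸ hphi1
      have he := eq_of_subset_of_card_le hsub hc
      rw [← he]; exact inter_subset_left
    have hmem2 : ({A, W \ A} : Finset (Finset α)) ∈ restrictSS 𝒮 W := by
      rw [← part_compl hun hdis, ← hTab]; exact hT
    rcases two_subset_of_three hAY1 hAc with rfl | rfl | rfl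
    · exact Or.inl hmem2
    · exact Or.inr (Or.inl hmem2)
    · exact Or.inr (Or.inr (Or.inl hmem2))
  · have hBY2 : B ⊆ {u, v, w} := by
      have hsub : ({u, v, w} : Finset α) ∩ B ⊆ B := inter_subset_right
      have hc : B.card ≤ (({u, v, w} : Finset α) ∩ B).card := hBc ▸ hphi2
      have he := eq_of_subset_of_card_le hsub hc
      rw [← he]; exact inter_subset_left
    have hmem2 : ({B, W \ B} : Finset (Finset α)) ∈ restrictSS 𝒮 W := by
      have hAZB : A = W \ B :=
        part_compl (by rw [union_comm]; exact hun) (by rw [inter_comm]; exact hdis)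
      rw [← hAZB, ← pair_comm, ← hTab]; exact hT
    rcases two_subset_of_three hBY2 hBc with rfl | rfl | rfl
    · exact Or.inr (Or.inr (Or.inr (Or.inl hmem2)))
    · exact Or.inr (Or.inr (Or.inr (Or.inr (Or.inl hmem2))))
    · exact Or.inr (Or.inr (Or.inr (Or.inr (Or.inr hmem2))))


set_option maxHeartbeats 4000000 in
set_option synthInstance.maxHeartbeats 1000000 in
set_option synthInstance.maxSize 10000 in
lemma core5 (b0 b1 b2 b3 b4 b5 b6 b7 b8 b9 : Bool)
    (h0 : (b2 || b3 || b5 || b6) = true)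
    (h1 : (b1 || b3 || b4 || b6) = true)
    (h2 : (b1 || b2 || b4 || b5) = true)
    (h3 : (b2 || b3 || b7 || b8) = true)
    (h4 : (b0 || b3 || b4 || b8) = true)
    (h5 : (b0 || b2 || b4 || b7) = true)
    (h6 : (b1 || b3 || b7 || b9) = true)
    (h7 : (b0 || b3 || b5 || b9) = true)
    (h8 : (b0 || b1 || b5 || b7) = true)
    (h9 : (b1 || b2 || b8 || b9) = true)
    (h10 : (b0 || b2 || b6 || b9) = true)
    (h11 : (b0 || b1 || b6 || b8) = true)
    (h12 : (b5 || b6 || b7 || b8) = true)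
    (h13 : (b0 || b6 || b1 || b8) = true)
    (h14 : (b0 || b5 || b1 || b7) = true)
    (h15 : (b4 || b6 || b7 || b9) = true)
    (h16 : (b0 || b6 || b2 || b9) = true)
    (h17 : (b0 || b4 || b2 || b7) = true)
    (h18 : (b4 || b5 || b8 || b9) = true)
    (h19 : (b0 || b5 || b3 || b9) = true)
    (h20 : (b0 || b4 || b3 || b8) = true)
    (h21 : (b4 || b8 || b5 || b9) = true)
    (h22 : (b1 || b8 || b2 || b9) = true)
    (h23 : (b1 || b4 || b2 || b5) = true)
    (h24 : (b4 || b7 || b6 || b9) = true)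
    (h25 : (b1 || b7 || b3 || b9) = true)
    (h26 : (b1 || b4 || b3 || b6) = true)
    (h27 : (b5 || b7 || b6 || b8) = true)
    (h28 : (b2 || b7 || b3 || b8) = true)
    (h29 : (b2 || b5 || b3 || b6) = true)
    (h30 : (b0 || b1 || b4 || b2 || b3 || b9) = true)
    (h31 : (b0 || b2 || b5 || b1 || b3 || b8) = true)
    (h32 : (b0 || b3 || b6 || b1 || b2 || b7) = true)
    (h33 : (b0 || b4 || b1 || b5 || b6 || b9) = true)
    (h34 : (b0 || b5 || b2 || b4 || b6 || b8) = true)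
    (h35 : (b0 || b6 || b3 || b4 || b5 || b7) = true)
    (h36 : (b1 || b4 || b0 || b7 || b8 || b9) = true)
    (h37 : (b1 || b7 || b2 || b4 || b8 || b6) = true)
    (h38 : (b1 || b8 || b3 || b4 || b7 || b5) = true)
    (h39 : (b2 || b5 || b0 || b7 || b9 || b8) = true)
    (h40 : (b2 || b7 || b1 || b5 || b9 || b6) = true)
    (h41 : (b2 || b9 || b3 || b5 || b7 || b4) = true)
    (h42 : (b3 || b6 || b0 || b8 || b9 || b7) = true)
    (h43 : (b3 || b8 || b1 || b6 || b9 || b5) = true)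
    (h44 : (b3 || b9 || b2 || b6 || b8 || b4) = true)
    : 5 ≤ List.countP id [b0, b1, b2, b3, b4, b5, b6, b7, b8, b9] := by
  revert h0 h1 h2 h3 h4 h5 h6 h7 h8 h9 h10 h11 h12 h13 h14 h15 h16 h17 h18 h19 h20 h21 h22 h23 h24 h25 h26 h27 h28 h29 h30 h31 h32 h33 h34 h35 h36 h37 h38 h39 h40 h41 h42 h43 h44
  revert b0 b1 b2 b3 b4 b5 b6 b7 b8 b9
  decide

set_option maxHeartbeats 1000000 in
lemma five_pairs {X : Finset α} {𝒮 : Finset (Finset (Finset α))}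
    (h𝒮 : IsSplitSystem X 𝒮) (hinj : IsInjective X 𝒮) {Z : Finset α}
    (hZX : Z ⊆ X) (hZc : Z.card = 5) {a b c d e : α}
    (hab : a ≠ b) (hac : a ≠ c) (had : a ≠ d) (hae : a ≠ e) (hbc : b ≠ c)
    (hbd : b ≠ d) (hbe : b ≠ e) (hcd : c ≠ d) (hce : c ≠ e) (hde : d ≠ e)
    (ha : a ∈ Z) (hb : b ∈ Z) (hc : c ∈ Z) (hd : d ∈ Z) (he : e ∈ Z) :
    5 ≤ List.countP id [decide (({({a, b} : Finset α), Z \ {a, b}} : Finset (Finset α)) ∈ restrictSS 𝒮 Z),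
      decide (({({a, c} : Finset α), Z \ {a, c}} : Finset (Finset α)) ∈ restrictSS 𝒮 Z),
      decide (({({a, d} : Finset α), Z \ {a, d}} : Finset (Finset α)) ∈ restrictSS 𝒮 Z),
      decide (({({a, e} : Finset α), Z \ {a, e}} : Finset (Finset α)) ∈ restrictSS 𝒮 Z),
      decide (({({b, c} : Finset α), Z \ {b, c}} : Finset (Finset α)) ∈ restrictSS 𝒮 Z),
      decide (({({b, d} : Finset α), Z \ {b, d}} : Finset (Finset α)) ∈ restrictSS 𝒮 Z),
      decide (({({b, e} : Finset α), Z \ {b, e}} : Finset (Finset α)) ∈ restrictSS 𝒮 Z),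
      decide (({({c, d} : Finset α), Z \ {c, d}} : Finset (Finset α)) ∈ restrictSS 𝒮 Z),
      decide (({({c, e} : Finset α), Z \ {c, e}} : Finset (Finset α)) ∈ restrictSS 𝒮 Z),
      decide (({({d, e} : Finset α), Z \ {d, e}} : Finset (Finset α)) ∈ restrictSS 𝒮 Z)] := by
  have hJ0 := lemC1 h𝒮 hinj hZX hZc (p := d) (q := e) (u := a) (v := b) hd he ha hb hde (fun e' => had e'.symm) (fun e' => hbd e'.symm) (fun e' => hae e'.symm) (fun e' => hbe e'.symm) hab
  rw [Finset.pair_comm d a, Finset.pair_comm e a, Finset.pair_comm d b, Finset.pair_comm e b] at hJ0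
  have hI0 := or4_bool hJ0
  have hJ1 := lemC1 h𝒮 hinj hZX hZc (p := c) (q := e) (u := a) (v := b) hc he ha hb hce (fun e' => hac e'.symm) (fun e' => hbc e'.symm) (fun e' => hae e'.symm) (fun e' => hbe e'.symm) hab
  rw [Finset.pair_comm c a, Finset.pair_comm e a, Finset.pair_comm c b, Finset.pair_comm e b] at hJ1
  have hI1 := or4_bool hJ1
  have hJ2 := lemC1 h𝒮 hinj hZX hZc (p := c) (q := d) (u := a) (v := b) hc hd ha hb hcd (fun e' => hac e'.symm) (fun e' => hbc e'.symm) (fun e' => had e'.symm) (fun e' => hbd e'.symm) hab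
  rw [Finset.pair_comm c a, Finset.pair_comm d a, Finset.pair_comm c b, Finset.pair_comm d b] at hJ2
  have hI2 := or4_bool hJ2
  have hJ3 := lemC1 h𝒮 hinj hZX hZc (p := d) (q := e) (u := a) (v := c) hd he ha hc hde (fun e' => had e'.symm) (fun e' => hcd e'.symm) (fun e' => hae e'.symm) (fun e' => hce e'.symm) hac
  rw [Finset.pair_comm d a, Finset.pair_comm e a, Finset.pair_comm d c, Finset.pair_comm e c] at hJ3
  have hI3 := or4_bool hJ3
  have hJ4 := lemC1 h𝒮 hinj hZX hZc (p := b) (q := e) (u := a) (v := c) hb he ha hc hbe (fun e' => hab e'.symm) hbc (fun e' => hae e'.symm) (fun e' => hce e'.symm) hac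
  rw [Finset.pair_comm b a, Finset.pair_comm e a, Finset.pair_comm e c] at hJ4
  have hI4 := or4_bool hJ4
  have hJ5 := lemC1 h𝒮 hinj hZX hZc (p := b) (q := d) (u := a) (v := c) hb hd ha hc hbd (fun e' => hab e'.symm) hbc (fun e' => had e'.symm) (fun e' => hcd e'.symm) hac
  rw [Finset.pair_comm b a, Finset.pair_comm d a, Finset.pair_comm d c] at hJ5
  have hI5 := or4_bool hJ5
  have hJ6 := lemC1 h𝒮 hinj hZX hZc (p := c) (q := e) (u := a) (v := d) hc he ha hd hce (fun e' => hac e'.symm) hcd (fun e' => hae e'.symm) (fun e' => hde e'.symm) had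
  rw [Finset.pair_comm c a, Finset.pair_comm e a, Finset.pair_comm e d] at hJ6
  have hI6 := or4_bool hJ6
  have hJ7 := lemC1 h𝒮 hinj hZX hZc (p := b) (q := e) (u := a) (v := d) hb he ha hd hbe (fun e' => hab e'.symm) hbd (fun e' => hae e'.symm) (fun e' => hde e'.symm) had
  rw [Finset.pair_comm b a, Finset.pair_comm e a, Finset.pair_comm e d] at hJ7
  have hI7 := or4_bool hJ7
  have hJ8 := lemC1 h𝒮 hinj hZX hZc (p := b) (q := c) (u := a) (v := d) hb hc ha hd hbc (fun e' => hab e'.symm) hbd (fun e' => hac e'.symm) hcd had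
  rw [Finset.pair_comm b a, Finset.pair_comm c a] at hJ8
  have hI8 := or4_bool hJ8
  have hJ9 := lemC1 h𝒮 hinj hZX hZc (p := c) (q := d) (u := a) (v := e) hc hd ha he hcd (fun e' => hac e'.symm) hce (fun e' => had e'.symm) hde hae
  rw [Finset.pair_comm c a, Finset.pair_comm d a] at hJ9
  have hI9 := or4_bool hJ9
  have hJ10 := lemC1 h𝒮 hinj hZX hZc (p := b) (q := d) (u := a) (v := e) hb hd ha he hbd (fun e' => hab e'.symm) hbe (fun e' => had e'.symm) hde hae
  rw [Finset.pair_comm b a, Finset.pair_comm d a] at hJ10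
  have hI10 := or4_bool hJ10
  have hJ11 := lemC1 h𝒮 hinj hZX hZc (p := b) (q := c) (u := a) (v := e) hb hc ha he hbc (fun e' => hab e'.symm) hbe (fun e' => hac e'.symm) hce hae
  rw [Finset.pair_comm b a, Finset.pair_comm c a] at hJ11
  have hI11 := or4_bool hJ11
  have hJ12 := lemC1 h𝒮 hinj hZX hZc (p := d) (q := e) (u := b) (v := c) hd he hb hc hde (fun e' => hbd e'.symm) (fun e' => hcd e'.symm) (fun e' => hbe e'.symm) (fun e' => hce e'.symm) hbc
  rw [Finset.pair_comm d b, Finset.pair_comm e b, Finset.pair_comm d c, Finset.pair_comm e c] at hJ12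
  have hI12 := or4_bool hJ12
  have hJ13 := lemC1 h𝒮 hinj hZX hZc (p := a) (q := e) (u := b) (v := c) ha he hb hc hae hab hac (fun e' => hbe e'.symm) (fun e' => hce e'.symm) hbc
  rw [Finset.pair_comm e b, Finset.pair_comm e c] at hJ13
  have hI13 := or4_bool hJ13
  have hJ14 := lemC1 h𝒮 hinj hZX hZc (p := a) (q := d) (u := b) (v := c) ha hd hb hc had hab hac (fun e' => hbd e'.symm) (fun e' => hcd e'.symm) hbc
  rw [Finset.pair_comm d b, Finset.pair_comm d c] at hJ14
  have hI14 := or4_bool hJ14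
  have hJ15 := lemC1 h𝒮 hinj hZX hZc (p := c) (q := e) (u := b) (v := d) hc he hb hd hce (fun e' => hbc e'.symm) hcd (fun e' => hbe e'.symm) (fun e' => hde e'.symm) hbd
  rw [Finset.pair_comm c b, Finset.pair_comm e b, Finset.pair_comm e d] at hJ15
  have hI15 := or4_bool hJ15
  have hJ16 := lemC1 h𝒮 hinj hZX hZc (p := a) (q := e) (u := b) (v := d) ha he hb hd hae hab had (fun e' => hbe e'.symm) (fun e' => hde e'.symm) hbd
  rw [Finset.pair_comm e b, Finset.pair_comm e d] at hJ16
  have hI16 := or4_bool hJ16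
  have hJ17 := lemC1 h𝒮 hinj hZX hZc (p := a) (q := c) (u := b) (v := d) ha hc hb hd hac hab had (fun e' => hbc e'.symm) hcd hbd
  rw [Finset.pair_comm c b] at hJ17
  have hI17 := or4_bool hJ17
  have hJ18 := lemC1 h𝒮 hinj hZX hZc (p := c) (q := d) (u := b) (v := e) hc hd hb he hcd (fun e' => hbc e'.symm) hce (fun e' => hbd e'.symm) hde hbe
  rw [Finset.pair_comm c b, Finset.pair_comm d b] at hJ18
  have hI18 := or4_bool hJ18
  have hJ19 := lemC1 h𝒮 hinj hZX hZc (p := a) (q := d) (u := b) (v := e) ha hd hb he had hab hae (fun e' => hbd e'.symm) hde hbe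
  rw [Finset.pair_comm d b] at hJ19
  have hI19 := or4_bool hJ19
  have hJ20 := lemC1 h𝒮 hinj hZX hZc (p := a) (q := c) (u := b) (v := e) ha hc hb he hac hab hae (fun e' => hbc e'.symm) hce hbe
  rw [Finset.pair_comm c b] at hJ20
  have hI20 := or4_bool hJ20
  have hJ21 := lemC1 h𝒮 hinj hZX hZc (p := b) (q := e) (u := c) (v := d) hb he hc hd hbe hbc hbd (fun e' => hce e'.symm) (fun e' => hde e'.symm) hcd
  rw [Finset.pair_comm e c, Finset.pair_comm e d] at hJ21
  have hI21 := or4_bool hJ21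
  have hJ22 := lemC1 h𝒮 hinj hZX hZc (p := a) (q := e) (u := c) (v := d) ha he hc hd hae hac had (fun e' => hce e'.symm) (fun e' => hde e'.symm) hcd
  rw [Finset.pair_comm e c, Finset.pair_comm e d] at hJ22
  have hI22 := or4_bool hJ22
  have hJ23 := lemC1 h𝒮 hinj hZX hZc (p := a) (q := b) (u := c) (v := d) ha hb hc hd hab hac had hbc hbd hcd
  have hI23 := or4_bool hJ23
  have hJ24 := lemC1 h𝒮 hinj hZX hZc (p := b) (q := d) (u := c) (v := e) hb hd hc he hbd hbc hbe (fun e' => hcd e'.symm) hde hce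
  rw [Finset.pair_comm d c] at hJ24
  have hI24 := or4_bool hJ24
  have hJ25 := lemC1 h𝒮 hinj hZX hZc (p := a) (q := d) (u := c) (v := e) ha hd hc he had hac hae (fun e' => hcd e'.symm) hde hce
  rw [Finset.pair_comm d c] at hJ25
  have hI25 := or4_bool hJ25
  have hJ26 := lemC1 h𝒮 hinj hZX hZc (p := a) (q := b) (u := c) (v := e) ha hb hc he hab hac hae hbc hbe hce
  have hI26 := or4_bool hJ26
  have hJ27 := lemC1 h𝒮 hinj hZX hZc (p := b) (q := c) (u := d) (v := e) hb hc hd he hbc hbd hbe hcd hce hde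
  have hI27 := or4_bool hJ27
  have hJ28 := lemC1 h𝒮 hinj hZX hZc (p := a) (q := c) (u := d) (v := e) ha hc hd he hac had hae hcd hce hde
  have hI28 := or4_bool hJ28
  have hJ29 := lemC1 h𝒮 hinj hZX hZc (p := a) (q := b) (u := d) (v := e) ha hb hd he hab had hae hbd hbe hde
  have hI29 := or4_bool hJ29
  have hJ30 := lemC2 h𝒮 hinj hZX hZc (x := a) (b := b) (c := c) (d := d) (e := e) ha hb hc hd he hab hac had hae hbc hbd hbe hcd hce hde
  have hI30 := or6_bool hJ30
  have hJ31 := lemC2 h𝒮 hinj hZX hZc (x := a) (b := b) (c := d) (d := c) (e := e) ha hb hd hc he hab had hac hae hbd hbc hbe (fun e' => hcd e'.symm) hde hce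
  have hI31 := or6_bool hJ31
  have hJ32 := lemC2 h𝒮 hinj hZX hZc (x := a) (b := b) (c := e) (d := c) (e := d) ha hb he hc hd hab hae hac had hbe hbc hbd (fun e' => hce e'.symm) (fun e' => hde e'.symm) hcd
  have hI32 := or6_bool hJ32
  have hJ33 := lemC2 h𝒮 hinj hZX hZc (x := b) (b := a) (c := c) (d := d) (e := e) hb ha hc hd he (fun e' => hab e'.symm) hbc hbd hbe hac had hae hcd hce hde
  rw [Finset.pair_comm b a] at hJ33
  have hI33 := or6_bool hJ33
  have hJ34 := lemC2 h𝒮 hinj hZX hZc (x := b) (b := a) (c := d) (d := c) (e := e) hb ha hd hc he (fun e' => hab e'.symm) hbd hbc hbe had hac hae (fun e' => hcd e'.symm) hde hce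
  rw [Finset.pair_comm b a] at hJ34
  have hI34 := or6_bool hJ34
  have hJ35 := lemC2 h𝒮 hinj hZX hZc (x := b) (b := a) (c := e) (d := c) (e := d) hb ha he hc hd (fun e' => hab e'.symm) hbe hbc hbd hae hac had (fun e' => hce e'.symm) (fun e' => hde e'.symm) hcd
  rw [Finset.pair_comm b a] at hJ35
  have hI35 := or6_bool hJ35
  have hJ36 := lemC2 h𝒮 hinj hZX hZc (x := c) (b := a) (c := b) (d := d) (e := e) hc ha hb hd he (fun e' => hac e'.symm) (fun e' => hbc e'.symm) hcd hce hab had hae hbd hbe hde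
  rw [Finset.pair_comm c a, Finset.pair_comm c b] at hJ36
  have hI36 := or6_bool hJ36
  have hJ37 := lemC2 h𝒮 hinj hZX hZc (x := c) (b := a) (c := d) (d := b) (e := e) hc ha hd hb he (fun e' => hac e'.symm) hcd (fun e' => hbc e'.symm) hce had hab hae (fun e' => hbd e'.symm) hde hbe
  rw [Finset.pair_comm c a, Finset.pair_comm c b] at hJ37
  have hI37 := or6_bool hJ37
  have hJ38 := lemC2 h𝒮 hinj hZX hZc (x := c) (b := a) (c := e) (d := b) (e := d) hc ha he hb hd (fun e' => hac e'.symm) hce (fun e' => hbc e'.symm) hcd hae hab had (fun e' => hbe e'.symm) (fun e' => hde e'.symm) hbd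
  rw [Finset.pair_comm c a, Finset.pair_comm c b] at hJ38
  have hI38 := or6_bool hJ38
  have hJ39 := lemC2 h𝒮 hinj hZX hZc (x := d) (b := a) (c := b) (d := c) (e := e) hd ha hb hc he (fun e' => had e'.symm) (fun e' => hbd e'.symm) (fun e' => hcd e'.symm) hde hab hac hae hbc hbe hce
  rw [Finset.pair_comm d a, Finset.pair_comm d b, Finset.pair_comm d c] at hJ39
  have hI39 := or6_bool hJ39
  have hJ40 := lemC2 h𝒮 hinj hZX hZc (x := d) (b := a) (c := c) (d := b) (e := e) hd ha hc hb he (fun e' => had e'.symm) (fun e' => hcd e'.symm) (fun e' => hbd e'.symm) hde hac hab hae (fun e' => hbc e'.symm) hce hbe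
  rw [Finset.pair_comm d a, Finset.pair_comm d c, Finset.pair_comm d b] at hJ40
  have hI40 := or6_bool hJ40
  have hJ41 := lemC2 h𝒮 hinj hZX hZc (x := d) (b := a) (c := e) (d := b) (e := c) hd ha he hb hc (fun e' => had e'.symm) hde (fun e' => hbd e'.symm) (fun e' => hcd e'.symm) hae hab hac (fun e' => hbe e'.symm) (fun e' => hce e'.symm) hbc
  rw [Finset.pair_comm d a, Finset.pair_comm d b, Finset.pair_comm d c] at hJ41
  have hI41 := or6_bool hJ41
  have hJ42 := lemC2 h𝒮 hinj hZX hZc (x := e) (b := a) (c := b) (d := c) (e := d) he ha hb hc hd (fun e' => hae e'.symm) (fun e' => hbe e'.symm) (fun e' => hce e'.symm) (fun e' => hde e'.symm) hab hac had hbc hbd hcd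
  rw [Finset.pair_comm e a, Finset.pair_comm e b, Finset.pair_comm e c, Finset.pair_comm e d] at hJ42
  have hI42 := or6_bool hJ42
  have hJ43 := lemC2 h𝒮 hinj hZX hZc (x := e) (b := a) (c := c) (d := b) (e := d) he ha hc hb hd (fun e' => hae e'.symm) (fun e' => hce e'.symm) (fun e' => hbe e'.symm) (fun e' => hde e'.symm) hac hab had (fun e' => hbc e'.symm) hcd hbd
  rw [Finset.pair_comm e a, Finset.pair_comm e c, Finset.pair_comm e b, Finset.pair_comm e d] at hJ43
  have hI43 := or6_bool hJ43
  have hJ44 := lemC2 h𝒮 hinj hZX hZc (x := e) (b := a) (c := d) (d := b) (e := c) he ha hd hb hc (fun e' => hae e'.symm) (fun e' => hde e'.symm) (fun e' => hbe e'.symm) (fun e' => hce e'.symm) had hab hac (fun e' => hbd e'.symm) (fun e' => hcd e'.symm) hbc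
  rw [Finset.pair_comm e a, Finset.pair_comm e d, Finset.pair_comm e b, Finset.pair_comm e c] at hJ44
  have hI44 := or6_bool hJ44
  exact core5 _ _ _ _ _ _ _ _ _ _ hI0 hI1 hI2 hI3 hI4 hI5 hI6 hI7 hI8 hI9 hI10 hI11 hI12 hI13 hI14 hI15 hI16 hI17 hI18 hI19 hI20 hI21 hI22 hI23 hI24 hI25 hI26 hI27 hI28 hI29 hI30 hI31 hI32 hI33 hI34 hI35 hI36 hI37 hI38 hI39 hI40 hI41 hI42 hI43 hI44


lemma rsplit_of_pair {Z p : Finset α} (hpZ : p ⊆ Z) (hp2 : p.card = 2) (hZc : Z.card = 5) :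
    IsRSplit Z 2 ({p, Z \ p} : Finset (Finset α)) := by
  have hsd : (Z \ p).card = 3 := by rw [card_sdiff_of_subset hpZ, hp2, hZc]
  refine ⟨⟨p, Z \ p, rfl, union_sdiff_of_subset hpZ, inter_sdiff_self p Z, ?_, ?_⟩,
    ⟨p, mem_insert_self _ _, hp2⟩, ?_⟩
  · intro e; rw [e] at hp2; simp at hp2
  · intro e; rw [e] at hsd; simp at hsd
  · intro A hA
    rcases mem_insert.mp hA with rfl | hA
    · omega
    · rw [mem_singleton.mp hA, hsd]; omega

set_option maxHeartbeats 1000000 in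
lemma fiveDices_of_injective {X : Finset α} {𝒮 : Finset (Finset (Finset α))}
    (h𝒮 : IsSplitSystem X 𝒮) (hinj : IsInjective X 𝒮) : FiveDices X 𝒮 := by
  right
  intro Z hZX hZc
  obtain ⟨a, b, c, d, e, hab, hac, had, hae, hbc, hbd, hbe, hcd, hce, hde, hZ⟩ :=
    exists_five hZc
  have ha : a ∈ Z := by rw [hZ]; simp
  have hb : b ∈ Z := by rw [hZ]; simp
  have hc : c ∈ Z := by rw [hZ]; simp
  have hd : d ∈ Z := by rw [hZ]; simp
  have he : e ∈ Z := by rw [hZ]; simp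
  set L : List (Finset α) := [{a, b}, {a, c}, {a, d}, {a, e}, {b, c}, {b, d}, {b, e}, {c, d}, {c, e}, {d, e}] with hL
  set q : Finset α → Bool := fun p => decide (({p, Z \ p} : Finset (Finset α)) ∈ restrictSS 𝒮 Z) with hq
  have hLprop : ∀ p ∈ L, p.card = 2 ∧ p ⊆ Z := by
    intro p hp
    simp only [hL, List.mem_cons, List.not_mem_nil, or_false] at hp
    rcases hp with rfl | rfl | rfl | rfl | rfl | rfl | rfl | rfl | rfl | rfl
    · exact ⟨card_pair hab, by rw [insert_subset_iff, singleton_subset_iff]; exact ⟨ha, hb⟩⟩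
    · exact ⟨card_pair hac, by rw [insert_subset_iff, singleton_subset_iff]; exact ⟨ha, hc⟩⟩
    · exact ⟨card_pair had, by rw [insert_subset_iff, singleton_subset_iff]; exact ⟨ha, hd⟩⟩
    · exact ⟨card_pair hae, by rw [insert_subset_iff, singleton_subset_iff]; exact ⟨ha, he⟩⟩
    · exact ⟨card_pair hbc, by rw [insert_subset_iff, singleton_subset_iff]; exact ⟨hb, hc⟩⟩
    · exact ⟨card_pair hbd, by rw [insert_subset_iff, singleton_subset_iff]; exact ⟨hb, hd⟩⟩
    · exact ⟨card_pair hbe, by rw [insert_subset_iff, singleton_subset_iff]; exact ⟨hb, he⟩⟩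
    · exact ⟨card_pair hcd, by rw [insert_subset_iff, singleton_subset_iff]; exact ⟨hc, hd⟩⟩
    · exact ⟨card_pair hce, by rw [insert_subset_iff, singleton_subset_iff]; exact ⟨hc, he⟩⟩
    · exact ⟨card_pair hde, by rw [insert_subset_iff, singleton_subset_iff]; exact ⟨hd, he⟩⟩
  have hLnodup : L.Nodup := by
    rw [hL]
    refine List.nodup_cons.mpr ⟨?_, List.nodup_cons.mpr ⟨?_, List.nodup_cons.mpr ⟨?_, List.nodup_cons.mpr ⟨?_, List.nodup_cons.mpr ⟨?_, List.nodup_cons.mpr ⟨?_, List.nodup_cons.mpr ⟨?_, List.nodup_cons.mpr ⟨?_, List.nodup_cons.mpr ⟨?_, List.nodup_singleton _⟩⟩⟩⟩⟩⟩⟩⟩⟩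
    · simp only [List.mem_cons, List.not_mem_nil, List.mem_singleton, or_false]
      push_neg
      exact ⟨(pair_ne_right (x := a) (y := b) (by simp only [mem_insert, mem_singleton]; push_neg; exact ⟨(fun e' => hab e'.symm), hbc⟩)), (pair_ne_right (x := a) (y := b) (by simp only [mem_insert, mem_singleton]; push_neg; exact ⟨(fun e' => hab e'.symm), hbd⟩)), (pair_ne_right (x := a) (y := b) (by simp only [mem_insert, mem_singleton]; push_neg; exact ⟨(fun e' => hab e'.symm), hbe⟩)), (pair_ne_left (x := a) (y := b) (by simp only [mem_insert, mem_singleton]; push_neg; exact ⟨hab, hac⟩)), (pair_ne_left (x := a) (y := b) (by simp only [mem_insert, mem_singleton]; push_neg; exact ⟨hab, had⟩)), (pair_ne_left (x := a) (y := b) (by simp only [mem_insert, mem_singleton]; push_neg; exact ⟨hab, hae⟩)), (pair_ne_left (x := a) (y := b) (by simp only [mem_insert, mem_singleton]; push_neg; exact ⟨hac, had⟩)), (pair_ne_left (x := a) (y := b) (by simp only [mem_insert, mem_singleton]; push_neg; exact ⟨hac, hae⟩)), (pair_ne_left (x := a) (y := b) (by simp only [mem_insert, mem_singleton]; push_neg;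 exact ⟨had, hae⟩))⟩
    · simp only [List.mem_cons, List.not_mem_nil, List.mem_singleton, or_false]
      push_neg
      exact ⟨(pair_ne_right (x := a) (y := c) (by simp only [mem_insert, mem_singleton]; push_neg; exact ⟨(fun e' => hac e'.symm), hcd⟩)), (pair_ne_right (x := a) (y := c) (by simp only [mem_insert, mem_singleton]; push_neg; exact ⟨(fun e' => hac e'.symm), hce⟩)), (pair_ne_left (x := a) (y := c) (by simp only [mem_insert, mem_singleton]; push_neg; exact ⟨hab, hac⟩)), (pair_ne_left (x := a) (y := c) (by simp only [mem_insert, mem_singleton]; push_neg; exact ⟨hab, had⟩)), (pair_ne_left (x := a) (y := c) (by simp only [mem_insert, mem_singleton]; push_neg; exact ⟨hab, hae⟩)), (pair_ne_left (x := a) (y := c) (by simp only [mem_insert, mem_singleton]; push_neg; exact ⟨hac, had⟩)), (pair_ne_left (x := a) (y := c) (by simp only [mem_insert, mem_singleton]; push_neg; exact ⟨hac, hae⟩)), (pair_ne_left (x := a) (y := c) (by simp only [mem_insert, mem_singleton]; push_neg; exact ⟨had, hae⟩))⟩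
    · simp only [List.mem_cons, List.not_mem_nil, List.mem_singleton, or_false]
      push_neg
      exact ⟨(pair_ne_right (x := a) (y := d) (by simp only [mem_insert, mem_singleton]; push_neg; exact ⟨(fun e' => had e'.symm), hde⟩)), (pair_ne_left (x := a) (y := d) (by simp only [mem_insert, mem_singleton]; push_neg; exact ⟨hab, hac⟩)), (pair_ne_left (x := a) (y := d) (by simp only [mem_insert, mem_singleton]; push_neg; exact ⟨hab, had⟩)), (pair_ne_left (x := a) (y := d) (by simp only [mem_insert, mem_singleton]; push_neg; exact ⟨hab, hae⟩)), (pair_ne_left (x := a) (y := d) (by simp only [mem_insert, mem_singleton]; push_neg; exact ⟨hac, had⟩)), (pair_ne_left (x := a) (y := d) (by simp only [mem_insert, mem_singleton]; push_neg; exact ⟨hac, hae⟩)), (pair_ne_left (x := a) (y := d) (by simp only [mem_insert, mem_singleton]; push_neg; exact ⟨had, hae⟩))⟩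
    · simp only [List.mem_cons, List.not_mem_nil, List.mem_singleton, or_false]
      push_neg
      exact ⟨(pair_ne_left (x := a) (y := e) (by simp only [mem_insert, mem_singleton]; push_neg; exact ⟨hab, hac⟩)), (pair_ne_left (x := a) (y := e) (by simp only [mem_insert, mem_singleton]; push_neg; exact ⟨hab, had⟩)), (pair_ne_left (x := a) (y := e) (by simp only [mem_insert, mem_singleton]; push_neg; exact ⟨hab, hae⟩)), (pair_ne_left (x := a) (y := e) (by simp only [mem_insert, mem_singleton]; push_neg; exact ⟨hac, had⟩)), (pair_ne_left (x := a) (y := e) (by simp only [mem_insert, mem_singleton]; push_neg; exact ⟨hac, hae⟩)), (pair_ne_left (x := a) (y := e) (by simp only [mem_insert, mem_singleton]; push_neg; exact ⟨had, hae⟩))⟩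
    · simp only [List.mem_cons, List.not_mem_nil, List.mem_singleton, or_false]
      push_neg
      exact ⟨(pair_ne_right (x := b) (y := c) (by simp only [mem_insert, mem_singleton]; push_neg; exact ⟨(fun e' => hbc e'.symm), hcd⟩)), (pair_ne_right (x := b) (y := c) (by simp only [mem_insert, mem_singleton]; push_neg; exact ⟨(fun e' => hbc e'.symm), hce⟩)), (pair_ne_left (x := b) (y := c) (by simp only [mem_insert, mem_singleton]; push_neg; exact ⟨hbc, hbd⟩)), (pair_ne_left (x := b) (y := c) (by simp only [mem_insert, mem_singleton]; push_neg; exact ⟨hbc, hbe⟩)), (pair_ne_left (x := b) (y := c) (by simp only [mem_insert, mem_singleton]; push_neg; exact ⟨hbd, hbe⟩))⟩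
    · simp only [List.mem_cons, List.not_mem_nil, List.mem_singleton, or_false]
      push_neg
      exact ⟨(pair_ne_right (x := b) (y := d) (by simp only [mem_insert, mem_singleton]; push_neg; exact ⟨(fun e' => hbd e'.symm), hde⟩)), (pair_ne_left (x := b) (y := d) (by simp only [mem_insert, mem_singleton]; push_neg; exact ⟨hbc, hbd⟩)), (pair_ne_left (x := b) (y := d) (by simp only [mem_insert, mem_singleton]; push_neg; exact ⟨hbc, hbe⟩)), (pair_ne_left (x := b) (y := d) (by simp only [mem_insert, mem_singleton]; push_neg; exact ⟨hbd, hbe⟩))⟩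
    · simp only [List.mem_cons, List.not_mem_nil, List.mem_singleton, or_false]
      push_neg
      exact ⟨(pair_ne_left (x := b) (y := e) (by simp only [mem_insert, mem_singleton]; push_neg; exact ⟨hbc, hbd⟩)), (pair_ne_left (x := b) (y := e) (by simp only [mem_insert, mem_singleton]; push_neg; exact ⟨hbc, hbe⟩)), (pair_ne_left (x := b) (y := e) (by simp only [mem_insert, mem_singleton]; push_neg; exact ⟨hbd, hbe⟩))⟩
    · simp only [List.mem_cons, List.not_mem_nil, List.mem_singleton, or_false]
      push_neg
      exact ⟨(pair_ne_right (x := c) (y := d) (by simp only [mem_insert, mem_singleton]; push_neg; exact ⟨(fun e' => hcd e'.symm), hde⟩)), (pair_ne_left (x := c) (y := d) (by simp only [mem_insert, mem_singleton]; push_neg; exact ⟨hcd, hce⟩))⟩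
    · simp only [List.mem_cons, List.not_mem_nil, List.mem_singleton, or_false]
      push_neg
      exact (pair_ne_left (x := c) (y := e) (by simp only [mem_insert, mem_singleton]; push_neg; exact ⟨hcd, hce⟩))
  have hcount : 5 ≤ L.countP q := by
    have h5 := five_pairs h𝒮 hinj hZX hZc hab hac had hae hbc hbd hbe hcd hce hde
      ha hb hc hd he
    have hb2 := countP_id_map q L
    rw [hL] at hb2
    simp only [List.map_cons, List.map_nil, hq] at hb2
    rw [hq, hL, ← hb2]
    exact h5
  refine ⟨((L.filter q).map fun p => ({p, Z \ p} : Finset (Finset α))).toFinset, ?_, ?_, ?_⟩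
  · intro T hT
    rw [List.mem_toFinset] at hT
    obtain ⟨p, hp, rfl⟩ := List.mem_map.mp hT
    have hqp : q p = true := (List.mem_filter.mp hp).2
    rw [hq] at hqp
    exact of_decide_eq_true hqp
  · have hinj2 : ∀ x ∈ L.filter q, ∀ y ∈ L.filter q,
        ({x, Z \ x} : Finset (Finset α)) = {y, Z \ y} → x = y := by
      intro x hx y hy hxy
      obtain ⟨hx2, hxZ⟩ := hLprop x (List.mem_filter.mp hx).1
      obtain ⟨hy2, hyZ⟩ := hLprop y (List.mem_filter.mp hy).1
      have hxm : x ∈ ({y, Z \ y} : Finset (Finset α)) := hxy ▸ mem_insert_self _ _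
      rcases mem_insert.mp hxm with h | h
      · exact h
      · exfalso
        rw [mem_singleton.mp h] at hx2
        rw [card_sdiff_of_subset hyZ, hy2, hZc] at hx2
        omega
    have hnd : ((L.filter q).map fun p => ({p, Z \ p} : Finset (Finset α))).Nodup :=
      List.Nodup.map_on hinj2 (hLnodup.filter q)
    rw [List.toFinset_card_of_nodup hnd, List.length_map, ← List.countP_eq_length_filter]
    exact hcount
  · intro T hT
    rw [List.mem_toFinset] at hT
    obtain ⟨p, hp, rfl⟩ := List.mem_map.mp hT
    obtain ⟨hp2, hpZ⟩ := hLprop p (List.mem_filter.mp hp).1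
    exact rsplit_of_pair hpZ hp2 hZc


set_option maxHeartbeats 10000000 in
set_option synthInstance.maxHeartbeats 1000000 in
set_option synthInstance.maxSize 10000 in
lemma core6 (b0 b1 b2 b3 b4 b5 b6 b7 b8 b9 b10 b11 b12 b13 b14 : Bool)
    (h0 : 5 ≤ List.countP id [b5, b6, b7, b8, b9, b10, b11, b12, b13, b14])
    (h1 : 5 ≤ List.countP id [b1, b2, b3, b4, b9, b10, b11, b12, b13, b14])
    (h2 : 5 ≤ List.countP id [b0, b2, b3, b4, b6, b7, b8, b12, b13, b14])
    (h3 : 5 ≤ List.countP id [b0, b1, b3, b4, b5, b7, b8, b10, b11, b14])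
    (h4 : 5 ≤ List.countP id [b0, b1, b2, b4, b5, b6, b8, b9, b11, b13])
    (h5 : 5 ≤ List.countP id [b0, b1, b2, b3, b5, b6, b7, b9, b10, b12])
    (h6 : (b0 || b1 || b5 || b12 || b13 || b14) = true)
    (h7 : (b0 || b2 || b6 || b10 || b11 || b14) = true)
    (h8 : (b0 || b3 || b7 || b9 || b11 || b13) = true)
    (h9 : (b0 || b4 || b8 || b9 || b10 || b12) = true)
    (h10 : (b1 || b2 || b9 || b7 || b8 || b14) = true)
    (h11 : (b1 || b3 || b10 || b6 || b8 || b13) = true)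
    (h12 : (b1 || b4 || b11 || b6 || b7 || b12) = true)
    (h13 : (b2 || b3 || b12 || b5 || b8 || b11) = true)
    (h14 : (b2 || b4 || b13 || b5 || b7 || b10) = true)
    (h15 : (b3 || b4 || b14 || b5 || b6 || b9) = true)
    : ((b0 && b1 && b5) || (b0 && b2 && b6) || (b0 && b3 && b7) || (b0 && b4 && b8) || (b1 && b2 && b9) || (b1 && b3 && b10) || (b1 && b4 && b11) || (b2 && b3 && b12) || (b2 && b4 && b13) || (b3 && b4 && b14) || (b5 && b6 && b9) || (b5 && b7 && b10) || (b5 && b8 && b11) || (b6 && b7 && b12) || (b6 && b8 && b13) || (b7 && b8 && b14) || (b9 && b10 && b12) || (b9 && b11 && b13) || (b10 && b11 && b14) || (b12 && b13 && b14)) = true := by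
  revert h0 h1 h2 h3 h4 h5 h6 h7 h8 h9 h10 h11 h12 h13 h14 h15
  revert b0 b1 b2 b3 b4 b5 b6 b7 b8 b9 b10 b11 b12 b13 b14
  decide

set_option maxHeartbeats 2000000 in
lemma sixDices_of_injective {X : Finset α} {𝒮 : Finset (Finset (Finset α))}
    (h𝒮 : IsSplitSystem X 𝒮) (hinj : IsInjective X 𝒮) : SixDices X 𝒮 := by
  right
  intro W hWX hWc
  obtain ⟨a, b, c, d, e, f, hab, hac, had, hae, haf, hbc, hbd, hbe, hbf, hcd, hce,
    hcf, hde, hdf, hef, hW⟩ := exists_six hWc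
  have hma : a ∈ W := by rw [hW]; simp
  have hmb : b ∈ W := by rw [hW]; simp
  have hmc : c ∈ W := by rw [hW]; simp
  have hmd : d ∈ W := by rw [hW]; simp
  have hme : e ∈ W := by rw [hW]; simp
  have hmf : f ∈ W := by rw [hW]; simp
  by_cases hno3 : ∃ T ∈ restrictSS 𝒮 W, IsRSplit W 3 T
  · exact Or.inl hno3
  right
  have hZs0 : ({b, c, d, e, f} : Finset α) ⊆ W := by
    rw [insert_subset_iff, insert_subset_iff, insert_subset_iff, insert_subset_iff, singleton_subset_iff]
    exact ⟨hmb, hmc, hmd, hme, hmf⟩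
  have hZc0 : ({b, c, d, e, f} : Finset α).card = 5 := card5 hbc hbd hbe hbf hcd hce hcf hde hdf hef
  have hF0 := five_pairs h𝒮 hinj (hZs0.trans hWX) hZc0 hbc hbd hbe hbf hcd hce hcf hde hdf hef (by simp : b ∈ ({b, c, d, e, f} : Finset α)) (by simp : c ∈ ({b, c, d, e, f} : Finset α)) (by simp : d ∈ ({b, c, d, e, f} : Finset α)) (by simp : e ∈ ({b, c, d, e, f} : Finset α)) (by simp : f ∈ ({b, c, d, e, f} : Finset α))
  have hLp0 : ∀ p ∈ ([{b, c}, {b, d}, {b, e}, {b, f}, {c, d}, {c, e}, {c, f}, {d, e}, {d, f}, {e, f}] : List (Finset α)), p.card = 2 ∧ p ⊆ ({b, c, d, e, f} : Finset α) := by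
    intro p hp
    simp only [List.mem_cons, List.not_mem_nil, or_false] at hp
    rcases hp with rfl | rfl | rfl | rfl | rfl | rfl | rfl | rfl | rfl | rfl
    · exact ⟨card_pair hbc, by rw [insert_subset_iff, singleton_subset_iff]; exact ⟨by simp, by simp⟩⟩
    · exact ⟨card_pair hbd, by rw [insert_subset_iff, singleton_subset_iff]; exact ⟨by simp, by simp⟩⟩
    · exact ⟨card_pair hbe, by rw [insert_subset_iff, singleton_subset_iff]; exact ⟨by simp, by simp⟩⟩
    · exact ⟨card_pair hbf, by rw [insert_subset_iff, singleton_subset_iff]; exact ⟨by simp, by simp⟩⟩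
    · exact ⟨card_pair hcd, by rw [insert_subset_iff, singleton_subset_iff]; exact ⟨by simp, by simp⟩⟩
    · exact ⟨card_pair hce, by rw [insert_subset_iff, singleton_subset_iff]; exact ⟨by simp, by simp⟩⟩
    · exact ⟨card_pair hcf, by rw [insert_subset_iff, singleton_subset_iff]; exact ⟨by simp, by simp⟩⟩
    · exact ⟨card_pair hde, by rw [insert_subset_iff, singleton_subset_iff]; exact ⟨by simp, by simp⟩⟩
    · exact ⟨card_pair hdf, by rw [insert_subset_iff, singleton_subset_iff]; exact ⟨by simp, by simp⟩⟩
    · exact ⟨card_pair hef, by rw [insert_subset_iff, singleton_subset_iff]; exact ⟨by simp, by simp⟩⟩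
  have hb0 := countP_id_map (fun p => decide (({p, ({b, c, d, e, f} : Finset α) \ p} : Finset (Finset α)) ∈ restrictSS 𝒮 ({b, c, d, e, f} : Finset α))) ([{b, c}, {b, d}, {b, e}, {b, f}, {c, d}, {c, e}, {c, f}, {d, e}, {d, f}, {e, f}] : List (Finset α))
  simp only [List.map_cons, List.map_nil] at hb0
  rw [hb0] at hF0
  have hcW0 : 5 ≤ List.countP (fun p => decide (({p, W \ p} : Finset (Finset α)) ∈ restrictSS 𝒮 W)) ([{b, c}, {b, d}, {b, e}, {b, f}, {c, d}, {c, e}, {c, f}, {d, e}, {d, f}, {e, f}] : List (Finset α)) := by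
    refine le_trans hF0 (List.countP_mono_left ?_)
    intro p hp hqp
    have hprop := hLp0 p hp
    exact decide_eq_true (lift_pair h𝒮 hWX hZs0 hWc hZc0 hno3 hprop.2 hprop.1 (of_decide_eq_true hqp))
  have hb'0 := countP_id_map (fun p => decide (({p, W \ p} : Finset (Finset α)) ∈ restrictSS 𝒮 W)) ([{b, c}, {b, d}, {b, e}, {b, f}, {c, d}, {c, e}, {c, f}, {d, e}, {d, f}, {e, f}] : List (Finset α))
  simp only [List.map_cons, List.map_nil] at hb'0
  rw [← hb'0] at hcW0
  have hZs1 : ({a, c, d, e, f} : Finset α) ⊆ W := by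
    rw [insert_subset_iff, insert_subset_iff, insert_subset_iff, insert_subset_iff, singleton_subset_iff]
    exact ⟨hma, hmc, hmd, hme, hmf⟩
  have hZc1 : ({a, c, d, e, f} : Finset α).card = 5 := card5 hac had hae haf hcd hce hcf hde hdf hef
  have hF1 := five_pairs h𝒮 hinj (hZs1.trans hWX) hZc1 hac had hae haf hcd hce hcf hde hdf hef (by simp : a ∈ ({a, c, d, e, f} : Finset α)) (by simp : c ∈ ({a, c, d, e, f} : Finset α)) (by simp : d ∈ ({a, c, d, e, f} : Finset α)) (by simp : e ∈ ({a, c, d, e, f} : Finset α)) (by simp : f ∈ ({a, c, d, e, f} : Finset α))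
  have hLp1 : ∀ p ∈ ([{a, c}, {a, d}, {a, e}, {a, f}, {c, d}, {c, e}, {c, f}, {d, e}, {d, f}, {e, f}] : List (Finset α)), p.card = 2 ∧ p ⊆ ({a, c, d, e, f} : Finset α) := by
    intro p hp
    simp only [List.mem_cons, List.not_mem_nil, or_false] at hp
    rcases hp with rfl | rfl | rfl | rfl | rfl | rfl | rfl | rfl | rfl | rfl
    · exact ⟨card_pair hac, by rw [insert_subset_iff, singleton_subset_iff]; exact ⟨by simp, by simp⟩⟩
    · exact ⟨card_pair had, by rw [insert_subset_iff, singleton_subset_iff]; exact ⟨by simp, by simp⟩⟩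
    · exact ⟨card_pair hae, by rw [insert_subset_iff, singleton_subset_iff]; exact ⟨by simp, by simp⟩⟩
    · exact ⟨card_pair haf, by rw [insert_subset_iff, singleton_subset_iff]; exact ⟨by simp, by simp⟩⟩
    · exact ⟨card_pair hcd, by rw [insert_subset_iff, singleton_subset_iff]; exact ⟨by simp, by simp⟩⟩
    · exact ⟨card_pair hce, by rw [insert_subset_iff, singleton_subset_iff]; exact ⟨by simp, by simp⟩⟩
    · exact ⟨card_pair hcf, by rw [insert_subset_iff, singleton_subset_iff]; exact ⟨by simp, by simp⟩⟩
    · exact ⟨card_pair hde, by rw [insert_subset_iff, singleton_subset_iff]; exact ⟨by simp, by simp⟩⟩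
    · exact ⟨card_pair hdf, by rw [insert_subset_iff, singleton_subset_iff]; exact ⟨by simp, by simp⟩⟩
    · exact ⟨card_pair hef, by rw [insert_subset_iff, singleton_subset_iff]; exact ⟨by simp, by simp⟩⟩
  have hb1 := countP_id_map (fun p => decide (({p, ({a, c, d, e, f} : Finset α) \ p} : Finset (Finset α)) ∈ restrictSS 𝒮 ({a, c, d, e, f} : Finset α))) ([{a, c}, {a, d}, {a, e}, {a, f}, {c, d}, {c, e}, {c, f}, {d, e}, {d, f}, {e, f}] : List (Finset α))
  simp only [List.map_cons, List.map_nil] at hb1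
  rw [hb1] at hF1
  have hcW1 : 5 ≤ List.countP (fun p => decide (({p, W \ p} : Finset (Finset α)) ∈ restrictSS 𝒮 W)) ([{a, c}, {a, d}, {a, e}, {a, f}, {c, d}, {c, e}, {c, f}, {d, e}, {d, f}, {e, f}] : List (Finset α)) := by
    refine le_trans hF1 (List.countP_mono_left ?_)
    intro p hp hqp
    have hprop := hLp1 p hp
    exact decide_eq_true (lift_pair h𝒮 hWX hZs1 hWc hZc1 hno3 hprop.2 hprop.1 (of_decide_eq_true hqp))
  have hb'1 := countP_id_map (fun p => decide (({p, W \ p} : Finset (Finset α)) ∈ restrictSS 𝒮 W)) ([{a, c}, {a, d}, {a, e}, {a, f}, {c, d}, {c, e}, {c, f}, {d, e}, {d, f}, {e, f}] : List (Finset α))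
  simp only [List.map_cons, List.map_nil] at hb'1
  rw [← hb'1] at hcW1
  have hZs2 : ({a, b, d, e, f} : Finset α) ⊆ W := by
    rw [insert_subset_iff, insert_subset_iff, insert_subset_iff, insert_subset_iff, singleton_subset_iff]
    exact ⟨hma, hmb, hmd, hme, hmf⟩
  have hZc2 : ({a, b, d, e, f} : Finset α).card = 5 := card5 hab had hae haf hbd hbe hbf hde hdf hef
  have hF2 := five_pairs h𝒮 hinj (hZs2.trans hWX) hZc2 hab had hae haf hbd hbe hbf hde hdf hef (by simp : a ∈ ({a, b, d, e, f} : Finset α)) (by simp : b ∈ ({a, b, d, e, f} : Finset α)) (by simp : d ∈ ({a, b, d, e, f} : Finset α)) (by simp : e ∈ ({a, b, d, e, f} : Finset α)) (by simp : f ∈ ({a, b, d, e, f} : Finset α))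
  have hLp2 : ∀ p ∈ ([{a, b}, {a, d}, {a, e}, {a, f}, {b, d}, {b, e}, {b, f}, {d, e}, {d, f}, {e, f}] : List (Finset α)), p.card = 2 ∧ p ⊆ ({a, b, d, e, f} : Finset α) := by
    intro p hp
    simp only [List.mem_cons, List.not_mem_nil, or_false] at hp
    rcases hp with rfl | rfl | rfl | rfl | rfl | rfl | rfl | rfl | rfl | rfl
    · exact ⟨card_pair hab, by rw [insert_subset_iff, singleton_subset_iff]; exact ⟨by simp, by simp⟩⟩
    · exact ⟨card_pair had, by rw [insert_subset_iff, singleton_subset_iff]; exact ⟨by simp, by simp⟩⟩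
    · exact ⟨card_pair hae, by rw [insert_subset_iff, singleton_subset_iff]; exact ⟨by simp, by simp⟩⟩
    · exact ⟨card_pair haf, by rw [insert_subset_iff, singleton_subset_iff]; exact ⟨by simp, by simp⟩⟩
    · exact ⟨card_pair hbd, by rw [insert_subset_iff, singleton_subset_iff]; exact ⟨by simp, by simp⟩⟩
    · exact ⟨card_pair hbe, by rw [insert_subset_iff, singleton_subset_iff]; exact ⟨by simp, by simp⟩⟩
    · exact ⟨card_pair hbf, by rw [insert_subset_iff, singleton_subset_iff]; exact ⟨by simp, by simp⟩⟩
    · exact ⟨card_pair hde, by rw [insert_subset_iff, singleton_subset_iff]; exact ⟨by simp, by simp⟩⟩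
    · exact ⟨card_pair hdf, by rw [insert_subset_iff, singleton_subset_iff]; exact ⟨by simp, by simp⟩⟩
    · exact ⟨card_pair hef, by rw [insert_subset_iff, singleton_subset_iff]; exact ⟨by simp, by simp⟩⟩
  have hb2 := countP_id_map (fun p => decide (({p, ({a, b, d, e, f} : Finset α) \ p} : Finset (Finset α)) ∈ restrictSS 𝒮 ({a, b, d, e, f} : Finset α))) ([{a, b}, {a, d}, {a, e}, {a, f}, {b, d}, {b, e}, {b, f}, {d, e}, {d, f}, {e, f}] : List (Finset α))
  simp only [List.map_cons, List.map_nil] at hb2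
  rw [hb2] at hF2
  have hcW2 : 5 ≤ List.countP (fun p => decide (({p, W \ p} : Finset (Finset α)) ∈ restrictSS 𝒮 W)) ([{a, b}, {a, d}, {a, e}, {a, f}, {b, d}, {b, e}, {b, f}, {d, e}, {d, f}, {e, f}] : List (Finset α)) := by
    refine le_trans hF2 (List.countP_mono_left ?_)
    intro p hp hqp
    have hprop := hLp2 p hp
    exact decide_eq_true (lift_pair h𝒮 hWX hZs2 hWc hZc2 hno3 hprop.2 hprop.1 (of_decide_eq_true hqp))
  have hb'2 := countP_id_map (fun p => decide (({p, W \ p} : Finset (Finset α)) ∈ restrictSS 𝒮 W)) ([{a, b}, {a, d}, {a, e}, {a, f}, {b, d}, {b, e}, {b, f}, {d, e}, {d, f}, {e, f}] : List (Finset α))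
  simp only [List.map_cons, List.map_nil] at hb'2
  rw [← hb'2] at hcW2
  have hZs3 : ({a, b, c, e, f} : Finset α) ⊆ W := by
    rw [insert_subset_iff, insert_subset_iff, insert_subset_iff, insert_subset_iff, singleton_subset_iff]
    exact ⟨hma, hmb, hmc, hme, hmf⟩
  have hZc3 : ({a, b, c, e, f} : Finset α).card = 5 := card5 hab hac hae haf hbc hbe hbf hce hcf hef
  have hF3 := five_pairs h𝒮 hinj (hZs3.trans hWX) hZc3 hab hac hae haf hbc hbe hbf hce hcf hef (by simp : a ∈ ({a, b, c, e, f} : Finset α)) (by simp : b ∈ ({a, b, c, e, f} : Finset α)) (by simp : c ∈ ({a, b, c, e, f} : Finset α)) (by simp : e ∈ ({a, b, c, e, f} : Finset α)) (by simp : f ∈ ({a, b, c, e, f} : Finset α))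
  have hLp3 : ∀ p ∈ ([{a, b}, {a, c}, {a, e}, {a, f}, {b, c}, {b, e}, {b, f}, {c, e}, {c, f}, {e, f}] : List (Finset α)), p.card = 2 ∧ p ⊆ ({a, b, c, e, f} : Finset α) := by
    intro p hp
    simp only [List.mem_cons, List.not_mem_nil, or_false] at hp
    rcases hp with rfl | rfl | rfl | rfl | rfl | rfl | rfl | rfl | rfl | rfl
    · exact ⟨card_pair hab, by rw [insert_subset_iff, singleton_subset_iff]; exact ⟨by simp, by simp⟩⟩
    · exact ⟨card_pair hac, by rw [insert_subset_iff, singleton_subset_iff]; exact ⟨by simp, by simp⟩⟩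
    · exact ⟨card_pair hae, by rw [insert_subset_iff, singleton_subset_iff]; exact ⟨by simp, by simp⟩⟩
    · exact ⟨card_pair haf, by rw [insert_subset_iff, singleton_subset_iff]; exact ⟨by simp, by simp⟩⟩
    · exact ⟨card_pair hbc, by rw [insert_subset_iff, singleton_subset_iff]; exact ⟨by simp, by simp⟩⟩
    · exact ⟨card_pair hbe, by rw [insert_subset_iff, singleton_subset_iff]; exact ⟨by simp, by simp⟩⟩
    · exact ⟨card_pair hbf, by rw [insert_subset_iff, singleton_subset_iff]; exact ⟨by simp, by simp⟩⟩
    · exact ⟨card_pair hce, by rw [insert_subset_iff, singleton_subset_iff]; exact ⟨by simp, by simp⟩⟩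
    · exact ⟨card_pair hcf, by rw [insert_subset_iff, singleton_subset_iff]; exact ⟨by simp, by simp⟩⟩
    · exact ⟨card_pair hef, by rw [insert_subset_iff, singleton_subset_iff]; exact ⟨by simp, by simp⟩⟩
  have hb3 := countP_id_map (fun p => decide (({p, ({a, b, c, e, f} : Finset α) \ p} : Finset (Finset α)) ∈ restrictSS 𝒮 ({a, b, c, e, f} : Finset α))) ([{a, b}, {a, c}, {a, e}, {a, f}, {b, c}, {b, e}, {b, f}, {c, e}, {c, f}, {e, f}] : List (Finset α))
  simp only [List.map_cons, List.map_nil] at hb3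
  rw [hb3] at hF3
  have hcW3 : 5 ≤ List.countP (fun p => decide (({p, W \ p} : Finset (Finset α)) ∈ restrictSS 𝒮 W)) ([{a, b}, {a, c}, {a, e}, {a, f}, {b, c}, {b, e}, {b, f}, {c, e}, {c, f}, {e, f}] : List (Finset α)) := by
    refine le_trans hF3 (List.countP_mono_left ?_)
    intro p hp hqp
    have hprop := hLp3 p hp
    exact decide_eq_true (lift_pair h𝒮 hWX hZs3 hWc hZc3 hno3 hprop.2 hprop.1 (of_decide_eq_true hqp))
  have hb'3 := countP_id_map (fun p => decide (({p, W \ p} : Finset (Finset α)) ∈ restrictSS 𝒮 W)) ([{a, b}, {a, c}, {a, e}, {a, f}, {b, c}, {b, e}, {b, f}, {c, e}, {c, f}, {e, f}] : List (Finset α))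
  simp only [List.map_cons, List.map_nil] at hb'3
  rw [← hb'3] at hcW3
  have hZs4 : ({a, b, c, d, f} : Finset α) ⊆ W := by
    rw [insert_subset_iff, insert_subset_iff, insert_subset_iff, insert_subset_iff, singleton_subset_iff]
    exact ⟨hma, hmb, hmc, hmd, hmf⟩
  have hZc4 : ({a, b, c, d, f} : Finset α).card = 5 := card5 hab hac had haf hbc hbd hbf hcd hcf hdf
  have hF4 := five_pairs h𝒮 hinj (hZs4.trans hWX) hZc4 hab hac had haf hbc hbd hbf hcd hcf hdf (by simp : a ∈ ({a, b, c, d, f} : Finset α)) (by simp : b ∈ ({a, b, c, d, f} : Finset α)) (by simp : c ∈ ({a, b, c, d, f} : Finset α)) (by simp : d ∈ ({a, b, c, d, f} : Finset α)) (by simp : f ∈ ({a, b, c, d, f} : Finset α))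
  have hLp4 : ∀ p ∈ ([{a, b}, {a, c}, {a, d}, {a, f}, {b, c}, {b, d}, {b, f}, {c, d}, {c, f}, {d, f}] : List (Finset α)), p.card = 2 ∧ p ⊆ ({a, b, c, d, f} : Finset α) := by
    intro p hp
    simp only [List.mem_cons, List.not_mem_nil, or_false] at hp
    rcases hp with rfl | rfl | rfl | rfl | rfl | rfl | rfl | rfl | rfl | rfl
    · exact ⟨card_pair hab, by rw [insert_subset_iff, singleton_subset_iff]; exact ⟨by simp, by simp⟩⟩
    · exact ⟨card_pair hac, by rw [insert_subset_iff, singleton_subset_iff]; exact ⟨by simp, by simp⟩⟩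
    · exact ⟨card_pair had, by rw [insert_subset_iff, singleton_subset_iff]; exact ⟨by simp, by simp⟩⟩
    · exact ⟨card_pair haf, by rw [insert_subset_iff, singleton_subset_iff]; exact ⟨by simp, by simp⟩⟩
    · exact ⟨card_pair hbc, by rw [insert_subset_iff, singleton_subset_iff]; exact ⟨by simp, by simp⟩⟩
    · exact ⟨card_pair hbd, by rw [insert_subset_iff, singleton_subset_iff]; exact ⟨by simp, by simp⟩⟩
    · exact ⟨card_pair hbf, by rw [insert_subset_iff, singleton_subset_iff]; exact ⟨by simp, by simp⟩⟩
    · exact ⟨card_pair hcd, by rw [insert_subset_iff, singleton_subset_iff]; exact ⟨by simp, by simp⟩⟩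
    · exact ⟨card_pair hcf, by rw [insert_subset_iff, singleton_subset_iff]; exact ⟨by simp, by simp⟩⟩
    · exact ⟨card_pair hdf, by rw [insert_subset_iff, singleton_subset_iff]; exact ⟨by simp, by simp⟩⟩
  have hb4 := countP_id_map (fun p => decide (({p, ({a, b, c, d, f} : Finset α) \ p} : Finset (Finset α)) ∈ restrictSS 𝒮 ({a, b, c, d, f} : Finset α))) ([{a, b}, {a, c}, {a, d}, {a, f}, {b, c}, {b, d}, {b, f}, {c, d}, {c, f}, {d, f}] : List (Finset α))
  simp only [List.map_cons, List.map_nil] at hb4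
  rw [hb4] at hF4
  have hcW4 : 5 ≤ List.countP (fun p => decide (({p, W \ p} : Finset (Finset α)) ∈ restrictSS 𝒮 W)) ([{a, b}, {a, c}, {a, d}, {a, f}, {b, c}, {b, d}, {b, f}, {c, d}, {c, f}, {d, f}] : List (Finset α)) := by
    refine le_trans hF4 (List.countP_mono_left ?_)
    intro p hp hqp
    have hprop := hLp4 p hp
    exact decide_eq_true (lift_pair h𝒮 hWX hZs4 hWc hZc4 hno3 hprop.2 hprop.1 (of_decide_eq_true hqp))
  have hb'4 := countP_id_map (fun p => decide (({p, W \ p} : Finset (Finset α)) ∈ restrictSS 𝒮 W)) ([{a, b}, {a, c}, {a, d}, {a, f}, {b, c}, {b, d}, {b, f}, {c, d}, {c, f}, {d, f}] : List (Finset α))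
  simp only [List.map_cons, List.map_nil] at hb'4
  rw [← hb'4] at hcW4
  have hZs5 : ({a, b, c, d, e} : Finset α) ⊆ W := by
    rw [insert_subset_iff, insert_subset_iff, insert_subset_iff, insert_subset_iff, singleton_subset_iff]
    exact ⟨hma, hmb, hmc, hmd, hme⟩
  have hZc5 : ({a, b, c, d, e} : Finset α).card = 5 := card5 hab hac had hae hbc hbd hbe hcd hce hde
  have hF5 := five_pairs h𝒮 hinj (hZs5.trans hWX) hZc5 hab hac had hae hbc hbd hbe hcd hce hde (by simp : a ∈ ({a, b, c, d, e} : Finset α)) (by simp : b ∈ ({a, b, c, d, e} : Finset α)) (by simp : c ∈ ({a, b, c, d, e} : Finset α)) (by simp : d ∈ ({a, b, c, d, e} : Finset α)) (by simp : e ∈ ({a, b, c, d, e} : Finset α))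
  have hLp5 : ∀ p ∈ ([{a, b}, {a, c}, {a, d}, {a, e}, {b, c}, {b, d}, {b, e}, {c, d}, {c, e}, {d, e}] : List (Finset α)), p.card = 2 ∧ p ⊆ ({a, b, c, d, e} : Finset α) := by
    intro p hp
    simp only [List.mem_cons, List.not_mem_nil, or_false] at hp
    rcases hp with rfl | rfl | rfl | rfl | rfl | rfl | rfl | rfl | rfl | rfl
    · exact ⟨card_pair hab, by rw [insert_subset_iff, singleton_subset_iff]; exact ⟨by simp, by simp⟩⟩
    · exact ⟨card_pair hac, by rw [insert_subset_iff, singleton_subset_iff]; exact ⟨by simp, by simp⟩⟩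
    · exact ⟨card_pair had, by rw [insert_subset_iff, singleton_subset_iff]; exact ⟨by simp, by simp⟩⟩
    · exact ⟨card_pair hae, by rw [insert_subset_iff, singleton_subset_iff]; exact ⟨by simp, by simp⟩⟩
    · exact ⟨card_pair hbc, by rw [insert_subset_iff, singleton_subset_iff]; exact ⟨by simp, by simp⟩⟩
    · exact ⟨card_pair hbd, by rw [insert_subset_iff, singleton_subset_iff]; exact ⟨by simp, by simp⟩⟩
    · exact ⟨card_pair hbe, by rw [insert_subset_iff, singleton_subset_iff]; exact ⟨by simp, by simp⟩⟩
    · exact ⟨card_pair hcd, by rw [insert_subset_iff, singleton_subset_iff]; exact ⟨by simp, by simp⟩⟩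
    · exact ⟨card_pair hce, by rw [insert_subset_iff, singleton_subset_iff]; exact ⟨by simp, by simp⟩⟩
    · exact ⟨card_pair hde, by rw [insert_subset_iff, singleton_subset_iff]; exact ⟨by simp, by simp⟩⟩
  have hb5 := countP_id_map (fun p => decide (({p, ({a, b, c, d, e} : Finset α) \ p} : Finset (Finset α)) ∈ restrictSS 𝒮 ({a, b, c, d, e} : Finset α))) ([{a, b}, {a, c}, {a, d}, {a, e}, {b, c}, {b, d}, {b, e}, {c, d}, {c, e}, {d, e}] : List (Finset α))
  simp only [List.map_cons, List.map_nil] at hb5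
  rw [hb5] at hF5
  have hcW5 : 5 ≤ List.countP (fun p => decide (({p, W \ p} : Finset (Finset α)) ∈ restrictSS 𝒮 W)) ([{a, b}, {a, c}, {a, d}, {a, e}, {b, c}, {b, d}, {b, e}, {c, d}, {c, e}, {d, e}] : List (Finset α)) := by
    refine le_trans hF5 (List.countP_mono_left ?_)
    intro p hp hqp
    have hprop := hLp5 p hp
    exact decide_eq_true (lift_pair h𝒮 hWX hZs5 hWc hZc5 hno3 hprop.2 hprop.1 (of_decide_eq_true hqp))
  have hb'5 := countP_id_map (fun p => decide (({p, W \ p} : Finset (Finset α)) ∈ restrictSS 𝒮 W)) ([{a, b}, {a, c}, {a, d}, {a, e}, {b, c}, {b, d}, {b, e}, {c, d}, {c, e}, {d, e}] : List (Finset α))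
  simp only [List.map_cons, List.map_nil] at hb'5
  rw [← hb'5] at hcW5
  have hP0 := or6_bool (lemP6 h𝒮 hinj hWX hWc hno3 hma hmb hmc hmd hme hmf hab hac hbc hde hdf hef (ne_of_mem_not_mem (show a ∈ ({a, b, c} : Finset α) by simp) (by simp only [mem_insert, mem_singleton]; push_neg; exact ⟨had, hae, haf⟩)))
  have hP1 := or6_bool (lemP6 h𝒮 hinj hWX hWc hno3 hma hmb hmd hmc hme hmf hab had hbd hce hcf hef (ne_of_mem_not_mem (show a ∈ ({a, b, d} : Finset α) by simp) (by simp only [mem_insert, mem_singleton]; push_neg; exact ⟨hac, hae, haf⟩)))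
  have hP2 := or6_bool (lemP6 h𝒮 hinj hWX hWc hno3 hma hmb hme hmc hmd hmf hab hae hbe hcd hcf hdf (ne_of_mem_not_mem (show a ∈ ({a, b, e} : Finset α) by simp) (by simp only [mem_insert, mem_singleton]; push_neg; exact ⟨hac, had, haf⟩)))
  have hP3 := or6_bool (lemP6 h𝒮 hinj hWX hWc hno3 hma hmb hmf hmc hmd hme hab haf hbf hcd hce hde (ne_of_mem_not_mem (show a ∈ ({a, b, f} : Finset α) by simp) (by simp only [mem_insert, mem_singleton]; push_neg; exact ⟨hac, had, hae⟩)))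
  have hP4 := or6_bool (lemP6 h𝒮 hinj hWX hWc hno3 hma hmc hmd hmb hme hmf hac had hcd hbe hbf hef (ne_of_mem_not_mem (show a ∈ ({a, c, d} : Finset α) by simp) (by simp only [mem_insert, mem_singleton]; push_neg; exact ⟨hab, hae, haf⟩)))
  have hP5 := or6_bool (lemP6 h𝒮 hinj hWX hWc hno3 hma hmc hme hmb hmd hmf hac hae hce hbd hbf hdf (ne_of_mem_not_mem (show a ∈ ({a, c, e} : Finset α) by simp) (by simp only [mem_insert, mem_singleton]; push_neg; exact ⟨hab, had, haf⟩)))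
  have hP6 := or6_bool (lemP6 h𝒮 hinj hWX hWc hno3 hma hmc hmf hmb hmd hme hac haf hcf hbd hbe hde (ne_of_mem_not_mem (show a ∈ ({a, c, f} : Finset α) by simp) (by simp only [mem_insert, mem_singleton]; push_neg; exact ⟨hab, had, hae⟩)))
  have hP7 := or6_bool (lemP6 h𝒮 hinj hWX hWc hno3 hma hmd hme hmb hmc hmf had hae hde hbc hbf hcf (ne_of_mem_not_mem (show a ∈ ({a, d, e} : Finset α) by simp) (by simp only [mem_insert, mem_singleton]; push_neg; exact ⟨hab, hac, haf⟩)))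
  have hP8 := or6_bool (lemP6 h𝒮 hinj hWX hWc hno3 hma hmd hmf hmb hmc hme had haf hdf hbc hbe hce (ne_of_mem_not_mem (show a ∈ ({a, d, f} : Finset α) by simp) (by simp only [mem_insert, mem_singleton]; push_neg; exact ⟨hab, hac, hae⟩)))
  have hP9 := or6_bool (lemP6 h𝒮 hinj hWX hWc hno3 hma hme hmf hmb hmc hmd hae haf hef hbc hbd hcd (ne_of_mem_not_mem (show a ∈ ({a, e, f} : Finset α) by simp) (by simp only [mem_insert, mem_singleton]; push_neg; exact ⟨hab, hac, had⟩)))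
  have hconc := core6 _ _ _ _ _ _ _ _ _ _ _ _ _ _ _ hcW0 hcW1 hcW2 hcW3 hcW4 hcW5 hP0 hP1 hP2 hP3 hP4 hP5 hP6 hP7 hP8 hP9
  simp only [Bool.or_eq_true, Bool.and_eq_true, decide_eq_true_eq] at hconc
  rcases hconc with (((((((((((((((((((h0) | h1) | h2) | h3) | h4) | h5) | h6) | h7) | h8) | h9) | h10) | h11) | h12) | h13) | h14) | h15) | h16) | h17) | h18) | h19
  · exact ⟨a, hma, b, hmb, c, hmc, hab, hac, hbc, h0.1.1, h0.1.2, h0.2⟩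
  · exact ⟨a, hma, b, hmb, d, hmd, hab, had, hbd, h1.1.1, h1.1.2, h1.2⟩
  · exact ⟨a, hma, b, hmb, e, hme, hab, hae, hbe, h2.1.1, h2.1.2, h2.2⟩
  · exact ⟨a, hma, b, hmb, f, hmf, hab, haf, hbf, h3.1.1, h3.1.2, h3.2⟩
  · exact ⟨a, hma, c, hmc, d, hmd, hac, had, hcd, h4.1.1, h4.1.2, h4.2⟩
  · exact ⟨a, hma, c, hmc, e, hme, hac, hae, hce, h5.1.1, h5.1.2, h5.2⟩
  · exact ⟨a, hma, c, hmc, f, hmf, hac, haf, hcf, h6.1.1, h6.1.2, h6.2⟩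
  · exact ⟨a, hma, d, hmd, e, hme, had, hae, hde, h7.1.1, h7.1.2, h7.2⟩
  · exact ⟨a, hma, d, hmd, f, hmf, had, haf, hdf, h8.1.1, h8.1.2, h8.2⟩
  · exact ⟨a, hma, e, hme, f, hmf, hae, haf, hef, h9.1.1, h9.1.2, h9.2⟩
  · exact ⟨b, hmb, c, hmc, d, hmd, hbc, hbd, hcd, h10.1.1, h10.1.2, h10.2⟩
  · exact ⟨b, hmb, c, hmc, e, hme, hbc, hbe, hce, h11.1.1, h11.1.2, h11.2⟩
  · exact ⟨b, hmb, c, hmc, f, hmf, hbc, hbf, hcf, h12.1.1, h12.1.2, h12.2⟩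
  · exact ⟨b, hmb, d, hmd, e, hme, hbd, hbe, hde, h13.1.1, h13.1.2, h13.2⟩
  · exact ⟨b, hmb, d, hmd, f, hmf, hbd, hbf, hdf, h14.1.1, h14.1.2, h14.2⟩
  · exact ⟨b, hmb, e, hme, f, hmf, hbe, hbf, hef, h15.1.1, h15.1.2, h15.2⟩
  · exact ⟨c, hmc, d, hmd, e, hme, hcd, hce, hde, h16.1.1, h16.1.2, h16.2⟩
  · exact ⟨c, hmc, d, hmd, f, hmf, hcd, hcf, hdf, h17.1.1, h17.1.2, h17.2⟩
  · exact ⟨c, hmc, e, hme, f, hmf, hce, hcf, hef, h18.1.1, h18.1.2, h18.2⟩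
  · exact ⟨d, hmd, e, hme, f, hmf, hde, hdf, hef, h19.1.1, h19.1.2, h19.2⟩


/-- A split system `𝒮` on `X` (`|X| ≥ 3`) is injective iff `𝒮`
4-dices, 5-dices and 6-dices `X`. -/
theorem statement12 (X : Finset α) (hX : 3 ≤ X.card)
    (𝒮 : Finset (Finset (Finset α))) (h𝒮 : IsSplitSystem X 𝒮) :
    IsInjective X 𝒮 ↔ FourDices X 𝒮 ∧ FiveDices X 𝒮 ∧ SixDices X 𝒮 := by
  constructor
  · intro hinj
    exact ⟨fourDices_of_injective h𝒮 hinj, fiveDices_of_injective h𝒮 hinj,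
      sixDices_of_injective h𝒮 hinj⟩
  · rintro ⟨h4, h5, h6⟩
    exact injective_of_dices h𝒮 h4 h5 h6

end InjectiveSplitSystems
end

section
/- Let 𝒮 be a split system on a finite set X with |X| ≥ 3. If 𝒮 is injective, then the restriction 𝒮|_Y is injective for every subset Y ⊆ X with |Y| ≥ 3. -/
namespace InjectiveSplitSystems

open Finset

variable {α : Type*} [DecidableEq α]

/-- If a split system `𝒮` on `X` (`|X| ≥ 3`) is injective, then the
restriction `𝒮|_Y` is injective for every `Y ⊆ X` with `|Y| ≥ 3`. -/
theorem statement13 (X : Finset α) (hX : 3 ≤ X.card)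
    (𝒮 : Finset (Finset (Finset α))) (h𝒮 : IsSplitSystem X 𝒮)
    (hinj : IsInjective X 𝒮) :
    ∀ Y ⊆ X, 3 ≤ Y.card → IsInjective Y (restrictSS 𝒮 Y) := by
  intro Y hYX _ Z Z' hZY hZ'Y hZ3 hZ'3 hne
  obtain ⟨S, hS𝒮, t, htS, t', ht'S, htt', hZt, hZ't'⟩ :=
    hinj Z Z' (hZY.trans hYX) (hZ'Y.trans hYX) hZ3 hZ'3 hne
  obtain ⟨A, B, hSAB, -, hABdisj, -, -⟩ := h𝒮.1 S hS𝒮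
  -- S = {t, t'} and t ∩ t' = ∅
  have hmem : ∀ u ∈ S, u = t ∨ u = t' := by
    intro u hu
    rw [hSAB] at htS ht'S hu
    simp only [mem_insert, mem_singleton] at htS ht'S hu
    rcases htS with rfl | rfl <;> rcases ht'S with rfl | rfl <;>
      rcases hu with rfl | rfl <;> tauto
  have hdisj : t ∩ t' = ∅ := by
    rw [hSAB] at htS ht'S
    simp only [mem_insert, mem_singleton] at htS ht'S
    rcases htS with rfl | rfl <;> rcases ht'S with rfl | rfl
    · exact absurd rfl htt'
    · exact hABdisj
    · rw [inter_comm]; exact hABdisj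
    · exact absurd rfl htt'
  have hZtY : Z ∩ (t ∩ Y) = Z ∩ t := by
    ext a
    simp only [mem_inter]
    exact ⟨fun h => ⟨h.1, h.2.1⟩, fun h => ⟨h.1, h.2, hZY h.1⟩⟩
  have hZ't'Y : Z' ∩ (t' ∩ Y) = Z' ∩ t' := by
    ext a
    simp only [mem_inter]
    exact ⟨fun h => ⟨h.1, h.2.1⟩, fun h => ⟨h.1, h.2, hZ'Y h.1⟩⟩
  have htYne : t ∩ Y ≠ ∅ := by
    intro h
    have : Z ∩ t = ∅ := by rw [← hZtY, h, inter_empty]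
    rw [this] at hZt; simp at hZt
  have ht'Yne : t' ∩ Y ≠ ∅ := by
    intro h
    have : Z' ∩ t' = ∅ := by rw [← hZ't'Y, h, inter_empty]
    rw [this] at hZ't'; simp at hZ't'
  refine ⟨restrictSplit S Y, ?_, t ∩ Y, ?_, t' ∩ Y, ?_, ?_, ?_, ?_⟩
  · rw [restrictSS, mem_filter]
    refine ⟨mem_image_of_mem _ hS𝒮, ?_⟩
    intro u hu
    obtain ⟨v, hv, rfl⟩ := mem_image.mp hu
    rcases hmem v hv with rfl | rfl
    · exact htYne
    · exact ht'Yne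
  · exact mem_image_of_mem _ htS
  · exact mem_image_of_mem _ ht'S
  · intro h
    have h1 : (t ∩ Y) ⊆ t ∩ t' := by
      intro a ha
      have ha' := ha
      rw [h] at ha'
      exact mem_inter.mpr ⟨(mem_inter.mp ha).1, (mem_inter.mp ha').1⟩
    rw [hdisj, subset_empty] at h1
    exact htYne h1
  · rwa [hZtY]
  · rwa [hZ't'Y]

end InjectiveSplitSystems
end

section
/- For any two integers n and m with n ≥ m ≥ 3, the injective dimension satisfies ID(n) ≥ ID(m). -/
namespace InjectiveSplitSystems

open Finset

variable {α : Type*} [DecidableEq α]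

lemma isSplit_pair {X : Finset α} {S : Finset (Finset α)} (hS : IsSplit X S)
    {t t' : Finset α} (ht : t ∈ S) (ht' : t' ∈ S) (htt : t ≠ t') :
    t ∩ t' = ∅ ∧ t ∪ t' = X ∧ ∀ u ∈ S, u = t ∨ u = t' := by
  obtain ⟨A, B, rfl, hU, hI, hA, hB⟩ := hS
  simp only [mem_insert, mem_singleton] at ht ht'
  rcases ht with rfl | rfl <;> rcases ht' with rfl | rfl
  · exact absurd rfl htt
  · exact ⟨hI, hU, fun u hu => by simpa [mem_insert, mem_singleton] using hu⟩
  · refine ⟨by rw [inter_comm]; exact hI, by rw [union_comm]; exact hU, ?_⟩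
    intro u hu
    simp only [mem_insert, mem_singleton] at hu
    tauto
  · exact absurd rfl htt

lemma mem_restrictSS {𝒮 : Finset (Finset (Finset α))} {Y : Finset α}
    {T : Finset (Finset α)} :
    T ∈ restrictSS 𝒮 Y ↔ (∃ S ∈ 𝒮, restrictSplit S Y = T) ∧ ∀ t ∈ T, t ≠ ∅ := by
  classical
  simp [restrictSS]

lemma restrict_splitSystem {X Y : Finset α} {𝒮 : Finset (Finset (Finset α))}
    (hXY : Y ⊆ X) (hY : 2 ≤ Y.card) (h : IsSplitSystem X 𝒮) :
    IsSplitSystem Y (restrictSS 𝒮 Y) := by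
  constructor
  · intro T hT
    rw [mem_restrictSS] at hT
    obtain ⟨⟨S, hS, rfl⟩, hne⟩ := hT
    obtain ⟨A, B, rfl, hU, hI, hA, hB⟩ := h.1 S hS
    refine ⟨A ∩ Y, B ∩ Y, ?_, ?_, ?_, ?_, ?_⟩
    · simp [restrictSplit, Finset.image_insert]
    · rw [← Finset.union_inter_distrib_right, hU, Finset.inter_eq_right.mpr hXY]
    · rw [← Finset.eq_empty_iff_forall_notMem.mpr]
      intro a ha
      simp only [mem_inter] at ha
      have : a ∈ A ∩ B := mem_inter.mpr ⟨ha.1.1, ha.2.1⟩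
      rw [hI] at this
      exact absurd this (notMem_empty a)
    · exact hne _ (by simp [restrictSplit])
    · exact hne _ (by simp [restrictSplit])
  · intro x hx
    rw [mem_restrictSS]
    have hxX : x ∈ X := hXY hx
    refine ⟨⟨{{x}, X \ {x}}, h.2 x hxX, ?_⟩, ?_⟩
    · have h1 : {x} ∩ Y = {x} := Finset.inter_eq_left.mpr (by simpa using hx)
      have h2 : (X \ {x}) ∩ Y = Y \ {x} := by
        ext a
        simp only [mem_inter, mem_sdiff, mem_singleton]
        exact ⟨fun ⟨⟨_, h2⟩, h3⟩ => ⟨h3, h2⟩, fun ⟨h1, h2⟩ => ⟨⟨hXY h1, h2⟩, h1⟩⟩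
      simp [restrictSplit, Finset.image_insert, h1, h2]
    · intro t ht
      simp only [mem_insert, mem_singleton] at ht
      rcases ht with rfl | rfl
      · simp
      · have : (Y \ {x}).Nonempty := by
          rw [Finset.sdiff_singleton_eq_erase]
          rw [← Finset.card_pos, Finset.card_erase_of_mem hx]
          omega
        exact this.ne_empty

lemma restrict_injective {X Y : Finset α} {𝒮 : Finset (Finset (Finset α))}
    (hXY : Y ⊆ X) (h𝒮 : IsSplitSystem X 𝒮) (h : IsInjective X 𝒮) :
    IsInjective Y (restrictSS 𝒮 Y) := by
  intro Y₁ Y₂ hY₁ hY₂ hc₁ hc₂ hne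
  obtain ⟨S, hS, t, ht, t', ht', htt, h1, h2⟩ :=
    h Y₁ Y₂ (hY₁.trans hXY) (hY₂.trans hXY) hc₁ hc₂ hne
  obtain ⟨hd, -, hmem⟩ := isSplit_pair (h𝒮.1 S hS) ht ht' htt
  have htY : (t ∩ Y).Nonempty := by
    have : (Y₁ ∩ t).Nonempty := Finset.card_pos.mp (by omega)
    obtain ⟨a, ha⟩ := this
    simp only [mem_inter] at ha
    exact ⟨a, mem_inter.mpr ⟨ha.2, hY₁ ha.1⟩⟩
  have ht'Y : (t' ∩ Y).Nonempty := by
    have : (Y₂ ∩ t').Nonempty := Finset.card_pos.mp (by omega)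
    obtain ⟨a, ha⟩ := this
    simp only [mem_inter] at ha
    exact ⟨a, mem_inter.mpr ⟨ha.2, hY₂ ha.1⟩⟩
  refine ⟨restrictSplit S Y, ?_, t ∩ Y, ?_, t' ∩ Y, ?_, ?_, ?_, ?_⟩
  · rw [mem_restrictSS]
    refine ⟨⟨S, hS, rfl⟩, ?_⟩
    intro u hu
    simp only [restrictSplit, mem_image] at hu
    obtain ⟨v, hv, rfl⟩ := hu
    rcases hmem v hv with rfl | rfl
    · exact htY.ne_empty
    · exact ht'Y.ne_empty
  · exact Finset.mem_image_of_mem _ ht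
  · exact Finset.mem_image_of_mem _ ht'
  · intro hEq
    obtain ⟨a, ha⟩ := htY
    have : a ∈ t ∩ t' := by
      have ha' := ha; rw [hEq] at ha'
      exact mem_inter.mpr ⟨(mem_inter.mp ha).1, (mem_inter.mp ha').1⟩
    rw [hd] at this
    exact absurd this (notMem_empty a)
  · have : Y₁ ∩ (t ∩ Y) = Y₁ ∩ t := by
      rw [← Finset.inter_assoc, Finset.inter_comm Y₁ t, Finset.inter_assoc,
        Finset.inter_eq_left.mpr hY₁, Finset.inter_comm]
    rwa [this]
  · have : Y₂ ∩ (t' ∩ Y) = Y₂ ∩ t' := by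
      rw [← Finset.inter_assoc, Finset.inter_comm Y₂ t', Finset.inter_assoc,
        Finset.inter_eq_left.mpr hY₂, Finset.inter_comm]
    rwa [this]

open scoped Classical in
/-- A choice of preimage split under restriction. -/
noncomputable def liftSplit (𝒮 : Finset (Finset (Finset α))) (Y : Finset α)
    (T : Finset (Finset α)) : Finset (Finset α) :=
  if h : ∃ S ∈ 𝒮, restrictSplit S Y = T then h.choose else ∅

lemma liftSplit_spec {𝒮 : Finset (Finset (Finset α))} {Y : Finset α}
    {T : Finset (Finset α)} (h : ∃ S ∈ 𝒮, restrictSplit S Y = T) :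
    liftSplit 𝒮 Y T ∈ 𝒮 ∧ restrictSplit (liftSplit 𝒮 Y T) Y = T := by
  classical
  rw [liftSplit, dif_pos h]
  exact h.choose_spec

lemma dim_restrict_le {𝒮 : Finset (Finset (Finset α))} {Y : Finset α} :
    dimSS (restrictSS 𝒮 Y) ≤ dimSS 𝒮 := by
  classical
  rw [dimSS]
  apply Finset.sup_le
  intro 𝒯 h𝒯
  simp only [Finset.mem_filter, Finset.mem_powerset] at h𝒯
  obtain ⟨hsub, hinc⟩ := h𝒯
  -- lift 𝒯
  have hspec : ∀ T ∈ 𝒯, liftSplit 𝒮 Y T ∈ 𝒮 ∧ restrictSplit (liftSplit 𝒮 Y T) Y = T := by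
    intro T hT
    exact liftSplit_spec ((mem_restrictSS.mp (hsub hT)).1)
  have hinj : Set.InjOn (liftSplit 𝒮 Y) ↑𝒯 := by
    intro T hT T' hT' hEq
    rw [← (hspec T hT).2, ← (hspec T' hT').2, hEq]
  have hcard : (𝒯.image (liftSplit 𝒮 Y)).card = 𝒯.card :=
    Finset.card_image_of_injOn hinj
  rw [← hcard]
  rw [dimSS]
  apply Finset.le_sup (α := ℕ)
  simp only [Finset.mem_filter, Finset.mem_powerset]
  constructor
  · intro S hS
    obtain ⟨T, hT, rfl⟩ := Finset.mem_image.mp hS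
    exact (hspec T hT).1
  · intro S hS S' hS' hSS'
    obtain ⟨T, hT, rfl⟩ := Finset.mem_image.mp hS
    obtain ⟨T', hT', rfl⟩ := Finset.mem_image.mp hS'
    have hTT' : T ≠ T' := fun h => hSS' (by rw [h])
    obtain ⟨hne, hint⟩ := hinc T hT T' hT' hTT'
    refine ⟨hSS', ?_⟩
    intro A hA B hB hAB
    have hA' : A ∩ Y ∈ T := by
      rw [← (hspec T hT).2]
      exact Finset.mem_image_of_mem _ hA
    have hB' : B ∩ Y ∈ T' := by
      rw [← (hspec T' hT').2]
      exact Finset.mem_image_of_mem _ hB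
    apply hint _ hA' _ hB'
    apply Finset.eq_empty_iff_forall_notMem.mpr
    intro a ha
    simp only [mem_inter] at ha
    have : a ∈ A ∩ B := mem_inter.mpr ⟨ha.1.1, ha.2.1⟩
    rw [hAB] at this
    exact absurd this (notMem_empty a)

/-- The full split system on a set of size at least 3 is an injective split system. -/
lemma exists_injective_system (n : ℕ) (hn : 3 ≤ n) :
    ∃ 𝒮 : Finset (Finset (Finset ℕ)),
      IsSplitSystem (Finset.Icc 1 n) 𝒮 ∧ IsInjective (Finset.Icc 1 n) 𝒮 := by
  set X : Finset ℕ := Finset.Icc 1 n with hX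
  have hXcard : X.card = n := by simp [hX]
  refine ⟨(X.powerset.filter fun A => A ≠ ∅ ∧ A ≠ X).image fun A => {A, X \ A}, ?_, ?_⟩
  · constructor
    · intro S hS
      simp only [Finset.mem_image, Finset.mem_filter, Finset.mem_powerset] at hS
      obtain ⟨A, ⟨hAX, hA0, hAn⟩, rfl⟩ := hS
      refine ⟨A, X \ A, rfl, Finset.union_sdiff_of_subset hAX, ?_, hA0, ?_⟩
      · ext a; simp
      · rw [← Finset.nonempty_iff_ne_empty, Finset.sdiff_nonempty]
        exact fun h => hAn (Finset.Subset.antisymm hAX h)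
    · intro x hx
      simp only [Finset.mem_image, Finset.mem_filter, Finset.mem_powerset]
      refine ⟨{x}, ⟨by simpa using hx, by simp, ?_⟩, rfl⟩
      intro h
      have : X.card = 1 := by rw [← h]; simp
      omega
  · intro Y Y' hY hY' hc hc' hne
    have hnsub : ¬ Y ⊆ Y' := by
      intro h
      exact hne (Finset.eq_of_subset_of_card_le h (by omega))
    obtain ⟨a, haY, haY'⟩ := Finset.not_subset.mp hnsub
    obtain ⟨b, hb⟩ : (Y.erase a).Nonempty := by
      rw [← Finset.card_pos, Finset.card_erase_of_mem haY]; omega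
    have hbY : b ∈ Y := Finset.mem_of_mem_erase hb
    have hba : b ≠ a := Finset.ne_of_mem_erase hb
    refine ⟨{({a, b} : Finset ℕ), X \ {a, b}}, ?_, {a, b}, by simp, X \ {a, b}, by simp, ?_, ?_, ?_⟩
    · simp only [Finset.mem_image, Finset.mem_filter, Finset.mem_powerset]
      refine ⟨{a, b}, ⟨?_, by simp, ?_⟩, rfl⟩
      · intro c hc
        simp only [mem_insert, mem_singleton] at hc
        rcases hc with rfl | rfl
        · exact hY haY
        · exact hY hbY
      · intro h
        have h1 : X.card ≤ 2 := by
          rw [← h]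
          exact (Finset.card_insert_le _ _).trans (by simp)
        omega
    · intro h
      have : a ∈ X \ ({a, b} : Finset ℕ) := by rw [← h]; simp
      simp at this
    · have : Y ∩ {a, b} = {a, b} := by
        rw [Finset.inter_eq_right]
        intro c hc
        simp only [mem_insert, mem_singleton] at hc
        rcases hc with rfl | rfl
        · exact haY
        · exact hbY
      rw [this, Finset.card_insert_of_notMem (by simpa using hba.symm), Finset.card_singleton]
    · have hsub : Y' \ ({a, b} : Finset ℕ) ⊆ Y' ∩ (X \ {a, b}) := by
        intro c hc
        simp only [mem_sdiff, mem_inter, mem_insert, mem_singleton] at hc ⊢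
        push_neg at hc
        exact ⟨hc.1, hY' hc.1, by tauto⟩
      have heq : Y' \ ({a, b} : Finset ℕ) = Y'.erase b := by
        ext c
        simp only [mem_sdiff, Finset.mem_erase, mem_insert, mem_singleton]
        constructor
        · rintro ⟨h1, h2⟩; push_neg at h2; exact ⟨h2.2, h1⟩
        · rintro ⟨h1, h2⟩
          refine ⟨h2, ?_⟩
          push_neg
          exact ⟨fun h => haY' (h ▸ h2), h1⟩
      calc 2 = 3 - 1 := rfl
        _ ≤ Y'.card - 1 := by omega
        _ ≤ (Y'.erase b).card := Finset.pred_card_le_card_erase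
        _ = (Y' \ ({a, b} : Finset ℕ)).card := by rw [heq]
        _ ≤ (Y' ∩ (X \ {a, b})).card := Finset.card_le_card hsub

/-- For integers `n ≥ m ≥ 3`, `ID(n) ≥ ID(m)`. -/
theorem statement14 (n m : ℕ) (hm : 3 ≤ m) (hmn : m ≤ n) : ID m ≤ ID n := by
  have hn : 3 ≤ n := hm.trans hmn
  obtain ⟨𝒮, hSS, hinj⟩ := exists_injective_system n hn
  have hne : {d : ℕ | ∃ 𝒮 : Finset (Finset (Finset ℕ)),
      IsSplitSystem (Finset.Icc 1 n) 𝒮 ∧ IsInjective (Finset.Icc 1 n) 𝒮 ∧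
        dimSS 𝒮 = d}.Nonempty := ⟨dimSS 𝒮, 𝒮, hSS, hinj, rfl⟩
  obtain ⟨𝒮₀, h1, h2, h3⟩ := Nat.sInf_mem hne
  have hsub : Finset.Icc 1 m ⊆ Finset.Icc 1 n := Finset.Icc_subset_Icc le_rfl hmn
  have hcard : 2 ≤ (Finset.Icc 1 m).card := by
    rw [Nat.card_Icc]; omega
  calc ID m ≤ dimSS (restrictSS 𝒮₀ (Finset.Icc 1 m)) :=
        Nat.sInf_le ⟨restrictSS 𝒮₀ (Finset.Icc 1 m),
          restrict_splitSystem hsub hcard h1, restrict_injective hsub h1 h2, rfl⟩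
    _ ≤ dimSS 𝒮₀ := dim_restrict_le
    _ = ID n := h3

end InjectiveSplitSystems
end

section
/- For all integers n ≥ 4, the injective dimension satisfies ID(n) ≤ ⌊n/2⌋. -/
namespace InjectiveSplitSystems

open Finset

variable {α : Type*} [DecidableEq α]

/-! ### Auxiliary development for Statement 15 -/

/-- The interval split system on `{1, …, n}`. -/
def ivSS (n : ℕ) : Finset (Finset (Finset ℕ)) :=
  ((Finset.Icc 1 (n-1) ×ˢ Finset.Icc 1 (n-1)).filter fun p => p.1 ≤ p.2).image
    fun p => {Finset.Icc p.1 p.2, Finset.Icc 1 n \ Finset.Icc p.1 p.2}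

lemma mem_ivSS {n : ℕ} {S : Finset (Finset ℕ)} :
    S ∈ ivSS n ↔ ∃ i j : ℕ, 1 ≤ i ∧ i ≤ j ∧ j ≤ n - 1 ∧
      S = {Finset.Icc i j, Finset.Icc 1 n \ Finset.Icc i j} := by
  simp only [ivSS, Finset.mem_image, Finset.mem_filter, Finset.mem_product, Finset.mem_Icc,
    Prod.exists]
  constructor
  · rintro ⟨i, j, ⟨⟨⟨hi, hi'⟩, hj, hj'⟩, hij⟩, rfl⟩
    exact ⟨i, j, hi, hij, hj', rfl⟩
  · rintro ⟨i, j, hi, hij, hj, rfl⟩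
    exact ⟨i, j, ⟨⟨⟨hi, le_trans hij hj⟩, le_trans hi hij, hj⟩, hij⟩, rfl⟩

lemma ivSS_isSplitSystem {n : ℕ} (hn : 4 ≤ n) :
    IsSplitSystem (Finset.Icc 1 n) (ivSS n) := by
  constructor
  · intro S hS
    obtain ⟨i, j, hi, hij, hj, rfl⟩ := mem_ivSS.mp hS
    refine ⟨Finset.Icc i j, Finset.Icc 1 n \ Finset.Icc i j, rfl, ?_, ?_, ?_, ?_⟩
    · exact Finset.union_sdiff_of_subset (Finset.Icc_subset_Icc hi (by omega))
    · exact Finset.inter_sdiff_self _ _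
    · exact Finset.nonempty_iff_ne_empty.mp (Finset.nonempty_Icc.mpr hij)
    · refine Finset.nonempty_iff_ne_empty.mp ⟨n, ?_⟩
      simp only [Finset.mem_sdiff, Finset.mem_Icc]
      omega
  · intro x hx
    rw [Finset.mem_Icc] at hx
    by_cases hxn : x ≤ n - 1
    · refine mem_ivSS.mpr ⟨x, x, hx.1, le_refl x, hxn, ?_⟩
      rw [Finset.Icc_self]
    · have hxn' : x = n := by omega
      refine mem_ivSS.mpr ⟨1, n - 1, le_refl 1, by omega, le_refl _, ?_⟩
      have h1 : Finset.Icc 1 n \ Finset.Icc 1 (n-1) = {x} := by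
        ext w; simp only [Finset.mem_sdiff, Finset.mem_Icc, Finset.mem_singleton]; omega
      have h2 : Finset.Icc 1 n \ {x} = Finset.Icc 1 (n-1) := by
        ext w; simp only [Finset.mem_sdiff, Finset.mem_Icc, Finset.mem_singleton]; omega
      rw [h1, h2]
      exact Finset.pair_comm _ _

lemma phiNe_symm_s15 {Y Y' : Finset ℕ} {S : Finset (Finset ℕ)} (h : phiNe Y Y' S) :
    phiNe Y' Y S := by
  obtain ⟨t, ht, t', ht', hne, h1, h2⟩ := h
  exact ⟨t', ht', t, ht, hne.symm, h2, h1⟩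

/-- If the interval `[i,j]` contains at most one element of `Y` and at least two of `Y'`,
then the corresponding interval split distinguishes `Y` from `Y'`. -/
lemma sep {n : ℕ} {Y Y' : Finset ℕ} (hY : Y ⊆ Finset.Icc 1 n) (hYc : Y.card = 3)
    {i j : ℕ} (hi : 1 ≤ i) (hij : i ≤ j) (hj : j ≤ n - 1) (hn : 4 ≤ n)
    (h1 : (Y ∩ Finset.Icc i j).card ≤ 1) (h2 : 2 ≤ (Y' ∩ Finset.Icc i j).card) :
    ∃ S ∈ ivSS n, phiNe Y Y' S := by
  set A := Finset.Icc i j with hA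
  set B := Finset.Icc 1 n \ A with hB
  refine ⟨{A, B}, mem_ivSS.mpr ⟨i, j, hi, hij, hj, rfl⟩, B, ?_, A, ?_, ?_, ?_, h2⟩
  · simp
  · simp
  · intro hBA
    have hnB : n ∈ B := by
      simp only [hB, hA, Finset.mem_sdiff, Finset.mem_Icc]; omega
    rw [hBA] at hnB
    simp only [hA, Finset.mem_Icc] at hnB
    omega
  · have hYB : Y ∩ B = Y \ A := by
      ext w
      simp only [hB, Finset.mem_inter, Finset.mem_sdiff]
      exact ⟨fun h => ⟨h.1, h.2.2⟩, fun h => ⟨h.1, hY h.1, h.2⟩⟩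
    rw [hYB]
    have := Finset.card_inter_add_card_sdiff Y A
    omega

/-- Any three distinct naturals can be listed in increasing order. -/
lemma ordered3 {Y : Finset ℕ} (h : Y.card = 3) :
    ∃ a b c : ℕ, a < b ∧ b < c ∧ Y = {a, b, c} := by
  obtain ⟨x, y, z, hxy, hxz, hyz, rfl⟩ := Finset.card_eq_three.mp h
  rcases lt_or_gt_of_ne hxy with h1 | h1 <;> rcases lt_or_gt_of_ne hxz with h2 | h2 <;>
    rcases lt_or_gt_of_ne hyz with h3 | h3
  · exact ⟨x, y, z, h1, h3, rfl⟩
  · exact ⟨x, z, y, h2, h3, by ext w; simp only [Finset.mem_insert, Finset.mem_singleton]; tauto⟩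
  · omega
  · exact ⟨z, x, y, h2, h1, by ext w; simp only [Finset.mem_insert, Finset.mem_singleton]; tauto⟩
  · exact ⟨y, x, z, h1, h2, by ext w; simp only [Finset.mem_insert, Finset.mem_singleton]; tauto⟩
  · omega
  · exact ⟨y, z, x, h3, h2, by ext w; simp only [Finset.mem_insert, Finset.mem_singleton]; tauto⟩
  · exact ⟨z, y, x, h3, h1, by ext w; simp only [Finset.mem_insert, Finset.mem_singleton]; tauto⟩

lemma two_le_inter {Z : Finset ℕ} {u v i j : ℕ} (huv : u ≠ v) (hu : u ∈ Z) (hv : v ∈ Z)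
    (h1 : i ≤ u) (h2 : u ≤ j) (h3 : i ≤ v) (h4 : v ≤ j) :
    2 ≤ (Z ∩ Finset.Icc i j).card := by
  have hsub : ({u, v} : Finset ℕ) ⊆ Z ∩ Finset.Icc i j := by
    intro w hw
    simp only [Finset.mem_insert, Finset.mem_singleton] at hw
    rcases hw with rfl | rfl
    · exact Finset.mem_inter.mpr ⟨hu, Finset.mem_Icc.mpr ⟨h1, h2⟩⟩
    · exact Finset.mem_inter.mpr ⟨hv, Finset.mem_Icc.mpr ⟨h3, h4⟩⟩
  calc 2 = ({u, v} : Finset ℕ).card := (Finset.card_pair huv).symm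
    _ ≤ _ := Finset.card_le_card hsub

lemma ivSS_isInjective {n : ℕ} (hn : 4 ≤ n) :
    IsInjective (Finset.Icc 1 n) (ivSS n) := by
  intro Y Y' hY hY' hc hc' hne
  obtain ⟨a, b, c, hab, hbc, hYeq⟩ := ordered3 hc
  obtain ⟨a', b', c', hab', hbc', hYeq'⟩ := ordered3 hc'
  have ha1 : 1 ≤ a ∧ c ≤ n := by
    have u1 := Finset.mem_Icc.mp (hY (show a ∈ Y by rw [hYeq]; simp))
    have u2 := Finset.mem_Icc.mp (hY (show c ∈ Y by rw [hYeq]; simp))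
    exact ⟨u1.1, u2.2⟩
  have ha2 : 1 ≤ a' ∧ c' ≤ n := by
    have u1 := Finset.mem_Icc.mp (hY' (show a' ∈ Y' by rw [hYeq']; simp))
    have u2 := Finset.mem_Icc.mp (hY' (show c' ∈ Y' by rw [hYeq']; simp))
    exact ⟨u1.1, u2.2⟩
  rcases lt_trichotomy b b' with hbb | hbb | hbb
  · -- interval [1, b] : contains a,b of Y, only a' of Y'
    refine (sep (i := 1) (j := b) hY' hc' (le_refl 1) (by omega) (by omega) hn ?_ ?_).imp
      fun S hS => ⟨hS.1, phiNe_symm_s15 hS.2⟩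
    · have hsub : Y' ∩ Finset.Icc 1 b ⊆ {a'} := by
        intro w hw
        rw [hYeq'] at hw
        simp only [Finset.mem_inter, Finset.mem_insert, Finset.mem_singleton,
          Finset.mem_Icc] at hw ⊢
        omega
      exact (Finset.card_le_card hsub).trans (by simp)
    · exact two_le_inter (by omega) (show a ∈ Y by rw [hYeq]; simp) (show b ∈ Y by rw [hYeq]; simp)
        (by omega) (by omega) (by omega) (by omega)
  · -- b = b'
    rcases lt_trichotomy a a' with haa | haa | haa
    · -- interval [a', b] : contains a',b' of Y', only b of Y
      refine sep (i := a') (j := b) hY hc (by omega) (by omega) (by omega) hn ?_ ?_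
      · have hsub : Y ∩ Finset.Icc a' b ⊆ {b} := by
          intro w hw
          rw [hYeq] at hw
          simp only [Finset.mem_inter, Finset.mem_insert, Finset.mem_singleton,
            Finset.mem_Icc] at hw ⊢
          omega
        exact (Finset.card_le_card hsub).trans (by simp)
      · exact two_le_inter (by omega) (show a' ∈ Y' by rw [hYeq']; simp) (show b' ∈ Y' by rw [hYeq']; simp)
          (by omega) (by omega) (by omega) (by omega)
    · -- a = a', b = b', so c ≠ c'
      have hcc : c ≠ c' := by
        intro hcc
        apply hne
        rw [hYeq, hYeq', haa, hbb, hcc]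
      rcases lt_or_gt_of_ne hcc with hcc' | hcc'
      · -- c < c' : interval [b, c] contains b, c of Y, only b' of Y'
        refine (sep (i := b) (j := c) hY' hc' (by omega) (by omega) (by omega) hn ?_ ?_).imp
          fun S hS => ⟨hS.1, phiNe_symm_s15 hS.2⟩
        · have hsub : Y' ∩ Finset.Icc b c ⊆ {b'} := by
            intro w hw
            rw [hYeq'] at hw
            simp only [Finset.mem_inter, Finset.mem_insert, Finset.mem_singleton,
              Finset.mem_Icc] at hw ⊢
            omega
          exact (Finset.card_le_card hsub).trans (by simp)
        · exact two_le_inter (by omega) (show b ∈ Y by rw [hYeq]; simp) (show c ∈ Y by rw [hYeq]; simp)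
            (by omega) (by omega) (by omega) (by omega)
      · -- c' < c : interval [b, c'] contains b', c' of Y', only b of Y
        refine sep (i := b) (j := c') hY hc (by omega) (by omega) (by omega) hn ?_ ?_
        · have hsub : Y ∩ Finset.Icc b c' ⊆ {b} := by
            intro w hw
            rw [hYeq] at hw
            simp only [Finset.mem_inter, Finset.mem_insert, Finset.mem_singleton,
              Finset.mem_Icc] at hw ⊢
            omega
          exact (Finset.card_le_card hsub).trans (by simp)
        · exact two_le_inter (by omega) (show b' ∈ Y' by rw [hYeq']; simp)
            (show c' ∈ Y' by rw [hYeq']; simp) (by omega) (by omega) (by omega) (by omega)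
    · -- a' < a : interval [a, b'] contains a, b of Y, only b' of Y'
      refine (sep (i := a) (j := b) hY' hc' (by omega) (by omega) (by omega) hn ?_ ?_).imp
        fun S hS => ⟨hS.1, phiNe_symm_s15 hS.2⟩
      · have hsub : Y' ∩ Finset.Icc a b ⊆ {b'} := by
          intro w hw
          rw [hYeq'] at hw
          simp only [Finset.mem_inter, Finset.mem_insert, Finset.mem_singleton,
            Finset.mem_Icc] at hw ⊢
          omega
        exact (Finset.card_le_card hsub).trans (by simp)
      · exact two_le_inter (by omega) (show a ∈ Y by rw [hYeq]; simp) (show b ∈ Y by rw [hYeq]; simp)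
          (by omega) (by omega) (by omega) (by omega)
  · -- b' < b : interval [1, b'] contains a', b' of Y', only a of Y
    refine sep (i := 1) (j := b') hY hc (le_refl 1) (by omega) (by omega) hn ?_ ?_
    · have hsub : Y ∩ Finset.Icc 1 b' ⊆ {a} := by
        intro w hw
        rw [hYeq] at hw
        simp only [Finset.mem_inter, Finset.mem_insert, Finset.mem_singleton,
          Finset.mem_Icc] at hw ⊢
        omega
      exact (Finset.card_le_card hsub).trans (by simp)
    · exact two_le_inter (by omega) (show a' ∈ Y' by rw [hYeq']; simp) (show b' ∈ Y' by rw [hYeq']; simp)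
        (by omega) (by omega) (by omega) (by omega)

lemma ivSS_dim_le {n : ℕ} (hn : 4 ≤ n) : dimSS (ivSS n) ≤ n / 2 := by
  classical
  rw [dimSS]
  apply Finset.sup_le
  intro 𝒯 h𝒯
  rw [Finset.mem_filter, Finset.mem_powerset] at h𝒯
  obtain ⟨hsub, hpair⟩ := h𝒯
  rw [Nat.le_div_iff_mul_le (by norm_num)]
  -- choice of interval representation
  set P : Finset (Finset ℕ) → ℕ × ℕ → Prop := fun S p => 1 ≤ p.1 ∧ p.1 ≤ p.2 ∧ p.2 ≤ n - 1 ∧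
    S = {Finset.Icc p.1 p.2, Finset.Icc 1 n \ Finset.Icc p.1 p.2} with hP
  have hex : ∀ S ∈ 𝒯, ∃ p, P S p := by
    intro S hS
    obtain ⟨i, j, hi, hij, hj, hSeq⟩ := mem_ivSS.mp (hsub hS)
    exact ⟨(i, j), hi, hij, hj, hSeq⟩
  set f : Finset (Finset ℕ) → ℕ × ℕ := fun S => if h : ∃ p, P S p then h.choose else (1, 1)
    with hf
  have hfs : ∀ S ∈ 𝒯, P S (f S) := by
    intro S hS
    simp only [hf, dif_pos (hex S hS)]
    exact (hex S hS).choose_spec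
  -- key pairwise facts
  have key : ∀ S ∈ 𝒯, ∀ T ∈ 𝒯, S ≠ T →
      (f S).1 ≠ (f T).1 ∧ (f S).2 ≠ (f T).2 ∧ (f S).1 ≤ (f T).2 := by
    intro S hS T hT hne
    obtain ⟨hi, hij, hj, hSeq⟩ := hfs S hS
    obtain ⟨hk, hkl, hl, hTeq⟩ := hfs T hT
    obtain ⟨-, hint⟩ := hpair S hS T hT hne
    set i := (f S).1 with hi0
    set j := (f S).2 with hj0
    set k := (f T).1 with hk0
    set l := (f T).2 with hl0
    have m1 : Finset.Icc i j ∈ S := by rw [hSeq]; simp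
    have m2 : Finset.Icc 1 n \ Finset.Icc i j ∈ S := by rw [hSeq]; simp
    have m3 : Finset.Icc k l ∈ T := by rw [hTeq]; simp
    have m4 : Finset.Icc 1 n \ Finset.Icc k l ∈ T := by rw [hTeq]; simp
    obtain ⟨x1, hx1⟩ := Finset.nonempty_of_ne_empty (hint _ m1 _ m3)
    obtain ⟨x2, hx2⟩ := Finset.nonempty_of_ne_empty (hint _ m1 _ m4)
    obtain ⟨x3, hx3⟩ := Finset.nonempty_of_ne_empty (hint _ m2 _ m3)
    simp only [Finset.mem_inter, Finset.mem_sdiff, Finset.mem_Icc] at hx1 hx2 hx3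
    refine ⟨?_, ?_, ?_⟩ <;> omega
  have lr : ∀ S ∈ 𝒯, ∀ T ∈ 𝒯, (f S).1 ≤ (f T).2 := by
    intro S hS T hT
    by_cases h : S = T
    · subst h; exact (hfs S hS).2.1
    · exact (key S hS T hT h).2.2
  set L : Finset ℕ := 𝒯.image fun S => (f S).1 with hL
  set R : Finset ℕ := 𝒯.image fun S => (f S).2 with hR
  have hLcard : L.card = 𝒯.card := Finset.card_image_of_injOn <| by
    intro S hS T hT hST
    by_contra hne
    exact (key S hS T hT hne).1 hST
  have hRcard : R.card = 𝒯.card := Finset.card_image_of_injOn <| by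
    intro S hS T hT hST
    by_contra hne
    exact (key S hS T hT hne).2.1 hST
  have hunion : L ∪ R ⊆ Finset.Icc 1 (n - 1) := by
    intro x hx
    rw [Finset.mem_union] at hx
    rcases hx with hx | hx <;> obtain ⟨S, hS, rfl⟩ := Finset.mem_image.mp hx <;>
      obtain ⟨h1, h2, h3, -⟩ := hfs S hS <;> rw [Finset.mem_Icc] <;> omega
  have hinter : (L ∩ R).card ≤ 1 := by
    rw [Finset.card_le_one]
    intro x hx y hy
    rw [Finset.mem_inter] at hx hy
    obtain ⟨S1, hS1, hxe⟩ := Finset.mem_image.mp hx.1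
    obtain ⟨S2, hS2, hxe'⟩ := Finset.mem_image.mp hx.2
    obtain ⟨T1, hT1, hye⟩ := Finset.mem_image.mp hy.1
    obtain ⟨T2, hT2, hye'⟩ := Finset.mem_image.mp hy.2
    have u1 := lr S1 hS1 T2 hT2
    have u2 := lr T1 hT1 S2 hS2
    omega
  have hcu : (L ∪ R).card ≤ n - 1 := by
    have := Finset.card_le_card hunion
    rwa [Nat.card_Icc, Nat.add_sub_cancel] at this
  have := Finset.card_union_add_card_inter L R
  omega

/-- For all integers `n ≥ 4`, `ID(n) ≤ ⌊n/2⌋`. -/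
theorem statement15 (n : ℕ) (hn : 4 ≤ n) : ID n ≤ n / 2 := by
  have hmem : dimSS (ivSS n) ∈ {d : ℕ | ∃ 𝒮 : Finset (Finset (Finset ℕ)),
      IsSplitSystem (Finset.Icc 1 n) 𝒮 ∧ IsInjective (Finset.Icc 1 n) 𝒮 ∧ dimSS 𝒮 = d} :=
    ⟨ivSS n, ivSS_isSplitSystem hn, ivSS_isInjective hn, rfl⟩
  exact (Nat.sInf_le hmem).trans (ivSS_dim_le hn)

end InjectiveSplitSystems
end
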